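/- arXiv:1112.4015 — 5 statements merged into one kernel-verified Lean document; each statement's English description precedes it below -/
import Mathlib

section
/- Let Γ be a finite connected graph without self-loops, let P_Γ(t) = ∑_{T spanning tree of Γ} ∏_{e∉T} t_e be its Symanzik (spanning tree) polynomial in positive variables (t_e)_{e∈E(Γ)}. Suppose v₁, v₂ are two distinct vertices joined by edges e₁,…,e_k, and let Γ̄ be the graph obtained from Γ by contracting v₁, v₂ and these k edges to a single vertex. Then for all positive t_e, P_Γ(t) ≥ (∑_{i=1}^k t_{e₁} ⋯ t̂_{e_i} ⋯ t_{e_k}) · P_{Γ̄}((t_e)_{e∈E(Γ̄)}), where the hat denotes omission. -/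
open Finset
open scoped Classical

/-- Reachability in the multigraph given by head/tail maps, using edges satisfying `P`. -/
def MGReach {V E : Type*} (hd tl : E → V) (P : E → Prop) (a b : V) : Prop :=
  Relation.ReflTransGen
    (fun x y => ∃ e, P e ∧ ((hd e = x ∧ tl e = y) ∨ (hd e = y ∧ tl e = x))) a b

/-- The multigraph is connected. -/
def MGConnected {V E : Type*} (hd tl : E → V) : Prop :=
  ∀ a b : V, MGReach hd tl (fun _ => True) a b

/-- A finset `T` of edges is a spanning tree. -/
def IsSpanningTree {V E : Type*} [Fintype V] (hd tl : E → V) (T : Finset E) : Prop :=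
  T.card + 1 = Fintype.card V ∧ ∀ a b : V, MGReach hd tl (fun e => e ∈ T) a b

/-- The Symanzik (spanning tree) polynomial `P_Γ(t) = ∑_{T spanning tree} ∏_{e ∉ T} t_e`. -/
noncomputable def symanzik {V E : Type*} [Fintype V] [Fintype E] [DecidableEq E]
    (hd tl : E → V) (t : E → ℝ) : ℝ :=
  ∑ T ∈ Finset.univ.filter (fun T : Finset E => IsSpanningTree hd tl T),
    ∏ e ∈ Finset.univ \ T, t e

/-- Contraction inequality for the Symanzik polynomial.  Let `Γ` be a finite connected
graph without self-loops, `v₁ ≠ v₂` two vertices, and `S` the (nonempty) set of all edges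
joining `v₁` and `v₂`.  Let `Γ̄` be the graph obtained by contracting `v₁, v₂` and the
edges of `S` to a single vertex (vertices `{v ≠ v₂}`, edges `{e ∉ S}`).  Then for all
positive edge weights `t`,
`P_Γ(t) ≥ (∑_{i} ∏_{e ∈ S, e ≠ e_i} t_e) · P_{Γ̄}(t)`. -/
theorem stmt_5 {V E : Type*} [Fintype V] [DecidableEq V] [Fintype E] [DecidableEq E]
    (hd tl : E → V)
    (hconn : MGConnected hd tl)
    (hloop : ∀ e, hd e ≠ tl e)
    (v₁ v₂ : V) (hne : v₁ ≠ v₂)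
    (S : Finset E) (hSne : S.Nonempty)
    (hS : ∀ e, e ∈ S ↔ ((hd e = v₁ ∧ tl e = v₂) ∨ (hd e = v₂ ∧ tl e = v₁)))
    (t : E → ℝ) (ht : ∀ e, 0 < t e) :
    symanzik hd tl t ≥
      (∑ i ∈ S, ∏ e ∈ S.erase i, t e) *
        symanzik
          (fun e : {e : E // e ∉ S} =>
            if h : hd e.1 = v₂ then (⟨v₁, hne⟩ : {v : V // v ≠ v₂})
            else ⟨hd e.1, h⟩)
          (fun e : {e : E // e ∉ S} =>
            if h : tl e.1 = v₂ then (⟨v₁, hne⟩ : {v : V // v ≠ v₂})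
            else ⟨tl e.1, h⟩)
          (fun e => t e.1) := by

  classical
  rw [ge_iff_le]
  set hd' := (fun e : {e : E // e ∉ S} =>
            if h : hd e.1 = v₂ then (⟨v₁, hne⟩ : {v : V // v ≠ v₂})
            else ⟨hd e.1, h⟩) with hhd'
  set tl' := (fun e : {e : E // e ∉ S} =>
            if h : tl e.1 = v₂ then (⟨v₁, hne⟩ : {v : V // v ≠ v₂})
            else ⟨tl e.1, h⟩) with htl'
  set lift : {e : E // e ∉ S} ↪ E := Function.Embedding.subtype _ with hliftdef
  set π : V → {v : V // v ≠ v₂} := fun w => if h : w = v₂ then ⟨v₁, hne⟩ else ⟨w, h⟩ with hπ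
  have hd'π : ∀ e, hd' e = π (hd e.1) := fun _ => rfl
  have tl'π : ∀ e, tl' e = π (tl e.1) := fun _ => rfl
  have hliftval : ∀ e : {e : E // e ∉ S}, lift e = e.1 := fun _ => rfl
  -- cardinality of the contracted vertex set
  have hcardV' : Fintype.card {v : V // v ≠ v₂} + 1 = Fintype.card V := by
    have h1 : Fintype.card {v : V // v ≠ v₂} = Fintype.card V - 1 := by
      simp [Fintype.card_subtype_compl, Fintype.card_subtype_eq]
    have h2 : 0 < Fintype.card V := Fintype.card_pos_iff.2 ⟨v₂⟩
    omega
  -- symmetry of reachability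
  have hsymm : ∀ (P : E → Prop) (a b : V), MGReach hd tl P a b → MGReach hd tl P b a := by
    intro P a b h
    exact (@Relation.ReflTransGen.stdSymm _ _
      ⟨fun x y ⟨e, hPe, h'⟩ => ⟨e, hPe, h'.symm⟩⟩).symm _ _ h
  -- step along an edge of S
  have hi_step : ∀ (P : E → Prop) (i : E), i ∈ S → P i → MGReach hd tl P v₂ v₁ := by
    intro P i hiS hPi
    refine Relation.ReflTransGen.single ⟨i, hPi, ?_⟩
    rcases (hS i).1 hiS with ⟨h1, h2⟩ | ⟨h1, h2⟩
    · exact Or.inr ⟨h1, h2⟩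
    · exact Or.inl ⟨h1, h2⟩
  -- every vertex reaches its projection
  have hproj : ∀ (P : E → Prop) (i : E), i ∈ S → P i → ∀ w : V,
      MGReach hd tl P w (π w).1 := by
    intro P i hiS hPi w
    by_cases h : w = v₂
    · have h2 : (π w).1 = v₁ := by simp [hπ, h]
      rw [h2, h]
      exact hi_step P i hiS hPi
    · have h2 : (π w).1 = w := by simp [hπ, h]
      rw [h2]
      exact Relation.ReflTransGen.refl
  -- the lifted tree is a spanning tree of Γ
  have key : ∀ i ∈ S, ∀ T' : Finset {e : E // e ∉ S}, IsSpanningTree hd' tl' T' →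
      IsSpanningTree hd tl (insert i (T'.map lift)) := by
    intro i hiS T' hT'
    have hinot : i ∉ T'.map lift := by
      simp only [Finset.mem_map]
      rintro ⟨e, -, rfl⟩
      exact e.2 hiS
    constructor
    · rw [Finset.card_insert_of_notMem hinot, Finset.card_map]
      have := hT'.1
      omega
    · intro a b
      have hPi : i ∈ insert i (T'.map lift) := Finset.mem_insert_self _ _
      have hlift : ∀ x y : {v : V // v ≠ v₂}, MGReach hd' tl' (· ∈ T') x y →
          MGReach hd tl (· ∈ insert i (T'.map lift)) x.1 y.1 := by
        intro x y hxy
        induction hxy with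
        | refl => exact Relation.ReflTransGen.refl
        | @tail c d h1 h2 ih =>
          refine ih.trans ?_
          obtain ⟨e, heT, hcase⟩ := h2
          have hmem : e.1 ∈ insert i (T'.map lift) :=
            Finset.mem_insert_of_mem (Finset.mem_map_of_mem lift heT)
          have estep : MGReach hd tl (· ∈ insert i (T'.map lift)) (hd e.1) (tl e.1) :=
            Relation.ReflTransGen.single ⟨e.1, hmem, Or.inl ⟨rfl, rfl⟩⟩
          have rhd := hproj (· ∈ insert i (T'.map lift)) i hiS hPi (hd e.1)
          have rtl := hproj (· ∈ insert i (T'.map lift)) i hiS hPi (tl e.1)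
          rw [← hd'π] at rhd
          rw [← tl'π] at rtl
          rcases hcase with ⟨hc, hd2⟩ | ⟨hc, hd2⟩
          · rw [hc] at rhd; rw [hd2] at rtl
            exact (hsymm _ _ _ rhd).trans (estep.trans rtl)
          · rw [hc] at rhd; rw [hd2] at rtl
            exact (hsymm _ _ _ rtl).trans ((hsymm _ _ _ estep).trans rhd)
      have ha := hproj (· ∈ insert i (T'.map lift)) i hiS hPi a
      have hb := hproj (· ∈ insert i (T'.map lift)) i hiS hPi b
      exact ha.trans ((hlift (π a) (π b) (hT'.2 (π a) (π b))).trans (hsymm _ _ _ hb))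
  -- complement decomposition
  have hsplit : ∀ i ∈ S, ∀ T' : Finset {e : E // e ∉ S},
      (univ \ insert i (T'.map lift)) = (S.erase i) ∪ ((univ \ T').map lift) := by
    intro i hiS T'
    ext e
    simp only [Finset.mem_sdiff, Finset.mem_univ, Finset.mem_insert, Finset.mem_map,
      Finset.mem_union, Finset.mem_erase, true_and, hliftval]
    by_cases he : e ∈ S
    · constructor
      · intro h
        push_neg at h
        exact Or.inl ⟨h.1, he⟩
      · rintro (⟨hne', -⟩ | ⟨e', -, rfl⟩)
        · push_neg
          exact ⟨hne', fun e' _ h => absurd (h ▸ he) e'.2⟩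
        · exact absurd he e'.2
    · constructor
      · intro h
        push_neg at h
        exact Or.inr ⟨⟨e, he⟩, fun hmem => h.2 ⟨e, he⟩ hmem rfl, rfl⟩
      · rintro (⟨-, heS⟩ | ⟨e', he', rfl⟩)
        · exact absurd heS he
        · have he'2 : e' ∉ T' := he'
          push_neg
          exact ⟨fun h => (h ▸ he) hiS, fun e'' hmem hh => he'2 (Subtype.ext hh ▸ hmem)⟩
  -- weight identity
  have hweight : ∀ i ∈ S, ∀ T' : Finset {e : E // e ∉ S},
      ∏ e ∈ univ \ insert i (T'.map lift), t e
        = (∏ e ∈ S.erase i, t e) * ∏ e ∈ univ \ T', t e.1 := by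
    intro i hiS T'
    have hdisj : Disjoint (S.erase i) ((univ \ T').map lift) := by
      rw [Finset.disjoint_left]
      intro e he hmem
      obtain ⟨e', -, rfl⟩ := Finset.mem_map.1 hmem
      exact e'.2 (Finset.mem_of_mem_erase he)
    rw [hsplit i hiS T', Finset.prod_union hdisj, Finset.prod_map]
    rfl
  -- the set of spanning trees of the contracted graph
  set trees := univ.filter (fun T' : Finset {e : E // e ∉ S} => IsSpanningTree hd' tl' T')
    with htrees
  have hRHS : (∑ i ∈ S, ∏ e ∈ S.erase i, t e) * symanzik hd' tl' (fun e => t e.1)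
      = ∑ p ∈ S ×ˢ trees, ∏ e ∈ univ \ insert p.1 (p.2.map lift), t e := by
    rw [symanzik, Finset.sum_mul_sum, Finset.sum_product]
    exact Finset.sum_congr rfl fun i hi => Finset.sum_congr rfl fun T' _ =>
      (hweight i hi T').symm
  rw [hRHS]
  have hinj : ∀ p ∈ S ×ˢ trees, ∀ q ∈ S ×ˢ trees,
      insert p.1 (p.2.map lift) = insert q.1 (q.2.map lift) → p = q := by
    intro p hp q hq hpq
    rw [Finset.mem_product] at hp hq
    have hnotmem : ∀ (j : E), j ∈ S → ∀ T' : Finset {e : E // e ∉ S},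
        j ∉ T'.map lift := by
      intro j hj T'
      simp only [Finset.mem_map]
      rintro ⟨e, -, rfl⟩
      exact e.2 hj
    have h1 : p.1 = q.1 := by
      have : p.1 ∈ insert q.1 (q.2.map lift) := hpq ▸ Finset.mem_insert_self p.1 _
      rcases Finset.mem_insert.1 this with h | h
      · exact h
      · exact absurd h (hnotmem p.1 hp.1 q.2)
    have h2 : p.2.map lift = q.2.map lift := by
      have hip := hnotmem p.1 hp.1 p.2
      have hiq := hnotmem q.1 hq.1 q.2
      rw [h1] at hpq hip
      calc p.2.map lift = (insert q.1 (p.2.map lift)).erase q.1 :=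
            (Finset.erase_insert hip).symm
        _ = (insert q.1 (q.2.map lift)).erase q.1 := by rw [hpq]
        _ = q.2.map lift := Finset.erase_insert hiq
    exact Prod.ext h1 (Finset.map_injective lift h2)
  rw [← Finset.sum_image (f := fun T => ∏ e ∈ univ \ T, t e)
    (g := fun p : E × Finset {e : E // e ∉ S} => insert p.1 (p.2.map lift)) hinj]
  rw [symanzik]
  refine Finset.sum_le_sum_of_subset_of_nonneg ?_ ?_
  · intro T hT
    obtain ⟨p, hp, rfl⟩ := Finset.mem_image.1 hT
    rw [Finset.mem_product] at hp
    rw [Finset.mem_filter]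
    refine ⟨Finset.mem_univ _, key p.1 hp.1 p.2 ?_⟩
    exact (Finset.mem_filter.1 hp.2).2
  · intro T _ _
    exact Finset.prod_nonneg fun e _ => (ht e).le
end

section
/- With notation as in the cut formula for M_Γ(t)⁻¹, for every edge e and every index 1 ≤ j ≤ V−1, the quantity |∑_{i=1}^{V−1} ρ_{v(i),e} (M_Γ(t)⁻¹)_{i,j} / t_e| is at most 2, uniformly in all positive (t_e). -/
open Finset
open scoped Classical

/-- The signed incidence matrix. -/
def inc {V E : Type*} [DecidableEq V] (hd tl : E → V) (v : V) (e : E) : ℝ :=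
  if hd e = v then 1 else if tl e = v then -1 else 0

section AuxLemmas

open Matrix

variable {V : Type*} {E : Type*} [DecidableEq V]

lemma inc_sum [Fintype V] (hd tl : E → V) (e : E) (h : hd e ≠ tl e) (f : V → ℝ) :
    ∑ v, inc hd tl v e * f v = f (hd e) - f (tl e) := by
  have key : ∀ v, inc hd tl v e * f v =
      (if hd e = v then f v else 0) - (if tl e = v then f v else 0) := by
    intro v
    unfold inc
    by_cases h1 : hd e = v <;> by_cases h2 : tl e = v <;> simp_all
  rw [Finset.sum_congr rfl (fun v _ => key v), Finset.sum_sub_distrib]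
  simp

lemma inc_nonpos (hd tl : E → V) (e : E) (v : V) (h : hd e ≠ v) :
    inc hd tl v e ≤ 0 := by
  unfold inc
  split_ifs <;> norm_num
  exact h (by assumption)

lemma inc_swap (hd tl : E → V) (hloop : ∀ e, hd e ≠ tl e) (v : V) (e : E) :
    inc tl hd v e = - inc hd tl v e := by
  unfold inc
  by_cases h1 : hd e = v
  · have h2 : tl e ≠ v := fun h => hloop e (h1.trans h.symm)
    simp [h1, h2]
  · by_cases h2 : tl e = v <;> simp [h1, h2]

lemma reach_const {hd tl : E → V} (f : V → ℝ) (hf : ∀ e, f (hd e) = f (tl e))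
    {a b : V} (h : MGReach hd tl (fun _ => True) a b) : f a = f b := by
  induction h with
  | refl => rfl
  | tail hab hstep ih =>
    obtain ⟨e, -, ⟨h1, h2⟩ | ⟨h1, h2⟩⟩ := hstep
    · exact ih.trans (h1 ▸ h2 ▸ hf e)
    · exact ih.trans (h1 ▸ h2 ▸ (hf e).symm)

lemma mgconnected_swap {hd tl : E → V} (hconn : MGConnected hd tl) :
    MGConnected tl hd := by
  intro a b
  refine Relation.ReflTransGen.mono ?_ a b (hconn a b)
  rintro x y ⟨e, -, ⟨h1, h2⟩ | ⟨h1, h2⟩⟩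
  · exact ⟨e, trivial, Or.inr ⟨h2, h1⟩⟩
  · exact ⟨e, trivial, Or.inl ⟨h2, h1⟩⟩

lemma max_principle [Fintype V] [Fintype E]
    (hd tl : E → V) (hconn : MGConnected hd tl) (hloop : ∀ e, hd e ≠ tl e)
    (t : E → ℝ) (ht : ∀ e, 0 < t e) (f : V → ℝ) (e : E)
    (hf : ∀ v, ∑ e', inc hd tl v e' * ((f (hd e') - f (tl e')) / t e') = inc hd tl v e) :
    ∀ v, f v ≤ f (hd e) := by
  have : Nonempty V := ⟨hd e⟩
  obtain ⟨v₀, hmax⟩ := Finite.exists_max f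
  suffices h : f v₀ ≤ f (hd e) by
    intro v; exact (hmax v).trans h
  have step : ∀ a, f a = f v₀ → a ≠ hd e → ∀ x,
      (∃ e', (hd e' = a ∧ tl e' = x) ∨ (hd e' = x ∧ tl e' = a)) → f x = f v₀ := by
    intro a ha hane x ⟨e', he'⟩
    have hterm : ∀ e'' ∈ Finset.univ (α := E),
        0 ≤ inc hd tl a e'' * ((f (hd e'') - f (tl e'')) / t e'') := by
      intro e'' _
      by_cases h1 : hd e'' = a
      · have hi : inc hd tl a e'' = 1 := by unfold inc; rw [if_pos h1]
        rw [hi, one_mul]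
        apply div_nonneg _ (le_of_lt (ht e''))
        rw [h1, ha]
        linarith [hmax (tl e'')]
      · by_cases h2 : tl e'' = a
        · have hi : inc hd tl a e'' = -1 := by unfold inc; rw [if_neg h1, if_pos h2]
          rw [hi, neg_one_mul, h2, ha]
          have h3 : (f (hd e'') - f v₀) / t e'' ≤ 0 :=
            div_nonpos_of_nonpos_of_nonneg (by linarith [hmax (hd e'')]) (le_of_lt (ht e''))
          linarith
        · have hi : inc hd tl a e'' = 0 := by unfold inc; rw [if_neg h1, if_neg h2]
          rw [hi, zero_mul]
    have hsum0 : ∑ e'' : E, inc hd tl a e'' * ((f (hd e'') - f (tl e'')) / t e'') = 0 := by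
      have h1 : ∑ e'' : E, inc hd tl a e'' * ((f (hd e'') - f (tl e'')) / t e'') ≤ 0 := by
        rw [hf a]; exact inc_nonpos hd tl e a (fun h => hane h.symm)
      have h2 : 0 ≤ ∑ e'' : E, inc hd tl a e'' * ((f (hd e'') - f (tl e'')) / t e'') :=
        Finset.sum_nonneg hterm
      linarith
    have hzero := (Finset.sum_eq_zero_iff_of_nonneg hterm).mp hsum0 e' (Finset.mem_univ e')
    rcases he' with ⟨h1, h2⟩ | ⟨h1, h2⟩
    · have hinc : inc hd tl a e' = 1 := by unfold inc; rw [if_pos h1]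
      rw [hinc, one_mul, div_eq_zero_iff] at hzero
      rcases hzero with h | h
      · rw [h1, h2, ha] at h; linarith
      · exact absurd h (ne_of_gt (ht e'))
    · have hne : hd e' ≠ a := fun hc => hloop e' (hc.trans h2.symm)
      have hinc : inc hd tl a e' = -1 := by unfold inc; rw [if_neg hne, if_pos h2]
      rw [hinc, neg_one_mul, neg_eq_zero, div_eq_zero_iff] at hzero
      rcases hzero with h | h
      · rw [h1, h2, ha] at h; linarith
      · exact absurd h (ne_of_gt (ht e'))
  have prop : ∀ a, MGReach hd tl (fun _ => True) a (hd e) → f a = f v₀ → f (hd e) = f v₀ := by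
    intro a h
    induction h using Relation.ReflTransGen.head_induction_on with
    | refl => exact fun h => h
    | @head a' c hrel hreach ih =>
      intro ha
      by_cases hae : a' = hd e
      · rw [← hae]; exact ha
      · obtain ⟨e', -, he'⟩ := hrel
        exact ih (step a' ha hae c ⟨e', he'⟩)
  have := prop v₀ (hconn v₀ (hd e)) rfl
  rw [this]

end AuxLemmas

section Reduced

open Matrix

variable (V : ℕ) {E : Type*} [Fintype E]

/-- The reduced weighted Laplacian. -/
noncomputable def Mred (hd tl : E → Fin (V+1)) (t : E → ℝ) :
    Matrix (Fin V) (Fin V) ℝ :=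
  Matrix.of fun i' j' => ∑ e' : E, inc hd tl i'.castSucc e' * (1 / t e') * inc hd tl j'.castSucc e'

lemma quad (hd tl : E → Fin (V+1)) (t : E → ℝ) (y : Fin V → ℝ) :
    y ⬝ᵥ (Mred V hd tl t *ᵥ y) =
      ∑ e' : E, (∑ i : Fin V, inc hd tl i.castSucc e' * y i)^2 / t e' := by
  have expand : ∀ e' : E, (∑ i : Fin V, inc hd tl i.castSucc e' * y i)^2 / t e'
      = ∑ i : Fin V, ∑ j' : Fin V,
          y i * (inc hd tl i.castSucc e' * (1/t e') * inc hd tl j'.castSucc e' * y j') := by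
    intro e'
    rw [sq, Finset.sum_mul_sum, Finset.sum_div]
    refine Finset.sum_congr rfl fun i _ => ?_
    rw [Finset.sum_div]
    refine Finset.sum_congr rfl fun j' _ => ?_
    field_simp
  rw [Finset.sum_congr rfl fun e' _ => expand e', Finset.sum_comm]
  simp only [dotProduct, Matrix.mulVec, Mred, Matrix.of_apply]
  refine Finset.sum_congr rfl fun i _ => ?_
  rw [Finset.sum_comm, Finset.mul_sum]
  refine Finset.sum_congr rfl fun j' _ => ?_
  rw [Finset.sum_mul, Finset.mul_sum]

lemma mulVec_Mred (hd tl : E → Fin (V+1)) (t : E → ℝ) (y : Fin V → ℝ) (i : Fin V) :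
    (Mred V hd tl t *ᵥ y) i =
      ∑ e' : E, inc hd tl i.castSucc e' *
        ((∑ i' : Fin V, inc hd tl i'.castSucc e' * y i') / t e') := by
  simp only [Matrix.mulVec, dotProduct, Mred, Matrix.of_apply, Finset.sum_mul]
  rw [Finset.sum_comm]
  refine Finset.sum_congr rfl fun e' _ => ?_
  rw [Finset.sum_div, Finset.mul_sum]
  refine Finset.sum_congr rfl fun i' _ => ?_
  ring

end Reduced

open Matrix

/-- Uniform bound for the combination of entries of the inverse reduced weighted
Laplacian. -/
theorem stmt_9 (V : ℕ) {E : Type*} [Fintype E]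
    (hd tl : E → Fin (V + 1))
    (hconn : MGConnected hd tl)
    (hloop : ∀ e, hd e ≠ tl e)
    (t : E → ℝ) (ht : ∀ e, 0 < t e)
    (e : E) (j : Fin V) :
    |(∑ i : Fin V, inc hd tl i.castSucc e *
        (Matrix.of fun i' j' : Fin V =>
          ∑ e' : E, inc hd tl i'.castSucc e' * (1 / t e') * inc hd tl j'.castSucc e')⁻¹ i j)
      / t e| ≤ 2 := by
  classical
  show |(∑ i : Fin V, inc hd tl i.castSucc e * (Mred V hd tl t)⁻¹ i j) / t e| ≤ 2
  set M := Mred V hd tl t with hMdef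
  have hsymm : Mᵀ = M := by
    ext a b
    simp only [Matrix.transpose_apply, hMdef, Mred, Matrix.of_apply]
    exact Finset.sum_congr rfl fun e' _ => by ring
  have hPD : M.PosDef := by
    refine Matrix.posDef_iff_dotProduct_mulVec.mpr ⟨?_, ?_⟩
    · show Mᴴ = M
      have hct : Mᴴ = Mᵀ := by
        ext a b
        simp [Matrix.conjTranspose_apply]
      rw [hct, hsymm]
    · intro x hx
      have hstar : star x = x := by simp
      rw [hstar, hMdef, quad]
      have hnn : ∀ e' ∈ Finset.univ (α := E),
          0 ≤ (∑ i : Fin V, inc hd tl i.castSucc e' * x i)^2 / t e' :=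
        fun e' _ => div_nonneg (sq_nonneg _) (le_of_lt (ht e'))
      rcases (Finset.sum_nonneg hnn).lt_or_eq with h | h
      · exact h
      · exfalso
        apply hx
        have hz := (Finset.sum_eq_zero_iff_of_nonneg hnn).mp h.symm
        set xe : Fin (V+1) → ℝ := Fin.lastCases 0 x with hxe
        have hxec : ∀ i : Fin V, xe i.castSucc = x i := fun i => by
          simp [hxe]
        have hxel : xe (Fin.last V) = 0 := by simp [hxe]
        have hedge : ∀ e', xe (hd e') = xe (tl e') := by
          intro e'
          have h1 := hz e' (Finset.mem_univ e')
          rw [div_eq_zero_iff] at h1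
          have h2 : ∑ i : Fin V, inc hd tl i.castSucc e' * x i = 0 := by
            rcases h1 with h1 | h1
            · exact sq_eq_zero_iff.mp h1
            · exact absurd h1 (ne_of_gt (ht e'))
          have h3 := inc_sum hd tl e' (hloop e') xe
          rw [Fin.sum_univ_castSucc, hxel] at h3
          simp only [hxec] at h3
          rw [h2] at h3
          · linarith [h3]
        funext i
        have h4 := reach_const xe hedge (hconn i.castSucc (Fin.last V))
        rw [hxec i, hxel] at h4
        simpa using h4
  have hU : IsUnit M.det := hPD.det_pos.ne'.isUnit
  have hinvsymm : ∀ a b : Fin V, M⁻¹ a b = M⁻¹ b a := by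
    have hT : (M⁻¹)ᵀ = M⁻¹ := by rw [Matrix.transpose_nonsing_inv, hsymm]
    intro a b
    conv_rhs => rw [← hT]
    rw [Matrix.transpose_apply]
  set y : Fin V → ℝ := M⁻¹ *ᵥ (fun i => inc hd tl i.castSucc e) with hy
  have hMy : M *ᵥ y = fun i => inc hd tl i.castSucc e := by
    rw [hy, Matrix.mulVec_mulVec, Matrix.mul_nonsing_inv _ hU, Matrix.one_mulVec]
  have htarget : ∑ i : Fin V, inc hd tl i.castSucc e * M⁻¹ i j = y j := by
    rw [hy]
    simp only [Matrix.mulVec, dotProduct]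
    refine Finset.sum_congr rfl fun k _ => ?_
    rw [hinvsymm j k]
    ring
  set yhat : Fin (V+1) → ℝ := Fin.lastCases 0 y with hyhat
  have hyc : ∀ i : Fin V, yhat i.castSucc = y i := fun i => by simp [hyhat]
  have hylast : yhat (Fin.last V) = 0 := by simp [hyhat]
  have hgrad : ∀ e' : E,
      ∑ i : Fin V, inc hd tl i.castSucc e' * y i = yhat (hd e') - yhat (tl e') := by
    intro e'
    rw [← inc_sum hd tl e' (hloop e') yhat, Fin.sum_univ_castSucc, hylast]
    simp only [hyc]
    ring
  have hbal1 : ∀ i : Fin V,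
      ∑ e' : E, inc hd tl i.castSucc e' * ((yhat (hd e') - yhat (tl e')) / t e')
        = inc hd tl i.castSucc e := by
    intro i
    have h1 : (M *ᵥ y) i = inc hd tl i.castSucc e := congrFun hMy i
    rw [hMdef, mulVec_Mred] at h1
    calc ∑ e' : E, inc hd tl i.castSucc e' * ((yhat (hd e') - yhat (tl e')) / t e')
        = ∑ e' : E, inc hd tl i.castSucc e' *
            ((∑ i' : Fin V, inc hd tl i'.castSucc e' * y i') / t e') :=
          Finset.sum_congr rfl fun e' _ => by rw [hgrad e']
      _ = inc hd tl i.castSucc e := h1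
  have hlastinc : ∀ e'' : E,
      inc hd tl (Fin.last V) e'' = - ∑ i : Fin V, inc hd tl i.castSucc e'' := by
    intro e''
    have h0 : ∑ v, inc hd tl v e'' * (1:ℝ) = 1 - 1 :=
      inc_sum hd tl e'' (hloop e'') (fun _ => (1:ℝ))
    rw [Fin.sum_univ_castSucc] at h0
    simp only [mul_one] at h0
    linarith
  have hbal : ∀ v, ∑ e' : E, inc hd tl v e' * ((yhat (hd e') - yhat (tl e')) / t e')
      = inc hd tl v e := by
    intro v
    induction v using Fin.lastCases with
    | last =>
      calc ∑ e' : E, inc hd tl (Fin.last V) e' * ((yhat (hd e') - yhat (tl e')) / t e')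
          = ∑ e' : E, -(∑ i : Fin V,
              inc hd tl i.castSucc e' * ((yhat (hd e') - yhat (tl e')) / t e')) := by
            refine Finset.sum_congr rfl fun e' _ => ?_
            rw [hlastinc e', neg_mul, Finset.sum_mul]
        _ = -∑ i : Fin V, ∑ e' : E,
              inc hd tl i.castSucc e' * ((yhat (hd e') - yhat (tl e')) / t e') := by
            rw [Finset.sum_neg_distrib, Finset.sum_comm]
        _ = -∑ i : Fin V, inc hd tl i.castSucc e := by
            rw [Finset.sum_congr rfl fun i _ => hbal1 i]
        _ = inc hd tl (Fin.last V) e := (hlastinc e).symm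
    | cast i => exact hbal1 i
  have hmaxp := max_principle hd tl hconn hloop t ht yhat e hbal
  have hminp : ∀ v, yhat (tl e) ≤ yhat v := by
    have hbal' : ∀ v, ∑ e' : E, inc tl hd v e' * (((-yhat) (tl e') - (-yhat) (hd e')) / t e')
        = inc tl hd v e := by
      intro v
      have hterm : ∀ e'' ∈ Finset.univ (α := E),
          inc tl hd v e'' * (((-yhat) (tl e'') - (-yhat) (hd e'')) / t e'')
            = -(inc hd tl v e'' * ((yhat (hd e'') - yhat (tl e'')) / t e'')) := by
        intro e'' _
        rw [inc_swap hd tl hloop v e'']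
        simp only [Pi.neg_apply]
        ring
      rw [Finset.sum_congr rfl hterm, Finset.sum_neg_distrib, hbal v,
        ← inc_swap hd tl hloop v e]
    have hmp := max_principle tl hd (mgconnected_swap hconn)
      (fun e'' => (hloop e'').symm) t ht (-yhat) e hbal'
    intro v
    have h2 := hmp v
    simp only [Pi.neg_apply] at h2
    linarith
  have h0hd : 0 ≤ yhat (hd e) := by have := hmaxp (Fin.last V); rw [hylast] at this; exact this
  have h0tl : yhat (tl e) ≤ 0 := by have := hminp (Fin.last V); rw [hylast] at this; exact this
  have hsdot : y ⬝ᵥ (M *ᵥ y) = yhat (hd e) - yhat (tl e) := by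
    rw [hMy, ← hgrad e]
    simp only [dotProduct]
    exact Finset.sum_congr rfl fun i _ => mul_comm _ _
  have hquadform : y ⬝ᵥ (M *ᵥ y) = ∑ e' : E, (yhat (hd e') - yhat (tl e'))^2 / t e' := by
    rw [hMdef, quad]
    exact Finset.sum_congr rfl fun e' _ => by rw [hgrad e']
  have hsingle : (yhat (hd e) - yhat (tl e))^2 / t e ≤ yhat (hd e) - yhat (tl e) :=
    calc (yhat (hd e) - yhat (tl e))^2 / t e
        ≤ ∑ e' : E, (yhat (hd e') - yhat (tl e'))^2 / t e' :=
          Finset.single_le_sum (f := fun e' => (yhat (hd e') - yhat (tl e'))^2 / t e')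
            (fun e' _ => div_nonneg (sq_nonneg _) (le_of_lt (ht e'))) (Finset.mem_univ e)
      _ = y ⬝ᵥ (M *ᵥ y) := hquadform.symm
      _ = yhat (hd e) - yhat (tl e) := hsdot
  have hste : yhat (hd e) - yhat (tl e) ≤ t e := by
    have h1 : (yhat (hd e) - yhat (tl e))^2 ≤ (yhat (hd e) - yhat (tl e)) * t e := by
      rw [div_le_iff₀ (ht e)] at hsingle
      linarith
    nlinarith [ht e, h0hd, h0tl]
  have hyub : y j ≤ yhat (hd e) := by have := hmaxp j.castSucc; rw [hyc j] at this; exact this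
  have hylb : yhat (tl e) ≤ y j := by have := hminp j.castSucc; rw [hyc j] at this; exact this
  have habs : |y j| ≤ yhat (hd e) - yhat (tl e) :=
    abs_le.mpr ⟨by linarith, by linarith⟩
  rw [htarget, abs_div, abs_of_pos (ht e)]
  have h2 : |y j| / t e ≤ 1 := by
    rw [div_le_one (ht e)]
    linarith
  linarith
end

section
/- For non-negative integers n₀, n₁, …, n_k, the integral A(n₀; n₁,…,n_k) = ∫_{[0,1]^k} ∏_{i=1}^k du_i · (∏_{i=1}^k u_i^{n_i+1}) / (1 + ∑_{i=1}^k u_i)^{∑_{j=0}^k (n_j+2)} is a well-defined finite positive real number, and moreover it is a rational number. -/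
open MeasureTheory Real Finset

namespace Stmt10Aux

noncomputable section

def cube (k : ℕ) : Set (Fin k → ℝ) := Set.univ.pi fun _ => Set.Icc (0 : ℝ) 1

structure Trm (k : ℕ) where
  q : ℚ
  p : Fin k → ℕ
  c : ℕ
  z : ℤ

def Trm.eval {k : ℕ} (T : Trm k) (u : Fin k → ℝ) : ℝ :=
  (T.q : ℝ) * (∏ i, u i ^ T.p i) * ((T.c : ℝ) + ∑ i, u i) ^ T.z

def Trm.ok {k : ℕ} (T : Trm k) : Prop :=
  1 ≤ T.c ∧ (0 ≤ T.z ∨ T.z + (∑ i, (T.p i : ℤ)) + k + 2 ≤ 0)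

def evalL {k : ℕ} (L : List (Trm k)) (u : Fin k → ℝ) : ℝ :=
  (L.map (fun T => T.eval u)).sum

lemma evalL_nil {k : ℕ} (u : Fin k → ℝ) : evalL [] u = 0 := rfl

lemma evalL_cons {k : ℕ} (T : Trm k) (L : List (Trm k)) (u : Fin k → ℝ) :
    evalL (T :: L) u = T.eval u + evalL L u := rfl

lemma evalL_ofFn {k n : ℕ} (g : Fin n → Trm k) (u : Fin k → ℝ) :
    evalL (List.ofFn g) u = ∑ j : Fin n, (g j).eval u := by
  simp [evalL, List.map_ofFn, List.sum_ofFn, Function.comp]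

lemma evalL_flatten {k : ℕ} (Ls : List (List (Trm k))) (u : Fin k → ℝ) :
    evalL Ls.flatten u = (Ls.map (fun l => evalL l u)).sum := by
  simp [evalL, Function.comp_def]

lemma evalL_append {k : ℕ} (L₁ L₂ : List (Trm k)) (u : Fin k → ℝ) :
    evalL (L₁ ++ L₂) u = evalL L₁ u + evalL L₂ u := by
  simp [evalL]

-- continuity / integrability
lemma Trm.continuousOn {k : ℕ} (T : Trm k) (hc : 1 ≤ T.c) :
    ContinuousOn T.eval (cube k) := by
  apply ContinuousOn.mul
  · exact (continuous_const.mul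
      (continuous_finset_prod _ fun i _ => (continuous_apply i).pow (T.p i))).continuousOn
  · apply ContinuousOn.zpow₀
    · exact (continuous_const.add
        (continuous_finset_sum _ fun i _ => continuous_apply i)).continuousOn
    · intro u hu
      left
      have h0 : ∀ i, 0 ≤ u i := fun i => (hu i (Set.mem_univ i)).1
      have h2 : (0:ℝ) ≤ ∑ i, u i := Finset.sum_nonneg fun i _ => h0 i
      have hc' : (1:ℝ) ≤ (T.c:ℝ) := by exact_mod_cast hc
      intro hcon
      nlinarith

lemma measurableSet_cube (k : ℕ) : MeasurableSet (cube k) :=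
  MeasurableSet.univ_pi fun _ => measurableSet_Icc

lemma isCompact_cube (k : ℕ) : IsCompact (cube k) :=
  isCompact_univ_pi fun _ => isCompact_Icc

lemma Trm.integrableOn {k : ℕ} (T : Trm k) (hc : 1 ≤ T.c) :
    IntegrableOn T.eval (cube k) :=
  (T.continuousOn hc).integrableOn_compact (isCompact_cube k)

lemma evalL_integrableOn {k : ℕ} (L : List (Trm k)) (h : ∀ T ∈ L, T.ok) :
    IntegrableOn (evalL L) (cube k) := by
  induction L with
  | nil =>
      have : evalL ([] : List (Trm k)) = fun _ => 0 := rfl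
      rw [this]
      exact integrableOn_zero
  | cons T L ih =>
      have h1 : IntegrableOn T.eval (cube k) := T.integrableOn (h T (by simp)).1
      have h2 : IntegrableOn (evalL L) (cube k) := ih fun T' hT' => h T' (by simp [hT'])
      have : evalL (T :: L) = fun u => T.eval u + evalL L u := rfl
      rw [this]
      exact h1.add h2

-- one-variable integrals
lemma pos_int (t : ℝ) (p m : ℕ) :
    ∫ x in (0:ℝ)..1, x ^ p * (t + x) ^ m
      = ∑ j ∈ Finset.range (m+1), (m.choose j : ℝ) * t ^ j / (p + (m - j) + 1) := by
  have h1 : ∀ x : ℝ, x ^ p * (t + x) ^ m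
      = ∑ j ∈ Finset.range (m+1), (m.choose j : ℝ) * t ^ j * x ^ (p + (m - j)) := by
    intro x
    rw [add_pow, Finset.mul_sum]
    refine Finset.sum_congr rfl fun j hj => ?_
    rw [pow_add]
    ring
  simp_rw [h1]
  rw [intervalIntegral.integral_finset_sum]
  · refine Finset.sum_congr rfl fun j hj => ?_
    rw [intervalIntegral.integral_const_mul, integral_pow]
    have hj' : j ≤ m := Nat.lt_succ_iff.mp (Finset.mem_range.mp hj)
    rw [div_eq_mul_inv]
    push_cast [Nat.cast_sub hj']
    ring
  · intro j hj
    exact (Continuous.intervalIntegrable (by continuity) _ _)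

lemma neg_int (t : ℝ) (ht : 1 ≤ t) (p e : ℕ) (he : p + 2 ≤ e) :
    ∫ x in (0:ℝ)..1, x ^ p * (t + x) ^ (-(e:ℤ))
      = ∑ j ∈ Finset.range (p+1), (p.choose j : ℝ) * (-t) ^ (p-j) *
          (((t+1) ^ ((j:ℤ)-e+1) - t ^ ((j:ℤ)-e+1)) / ((j:ℤ)-e+1)) := by
  set F : ℝ → ℝ := fun x => ∑ j ∈ Finset.range (p+1),
    (p.choose j : ℝ) * (-t) ^ (p-j) * ((t+x) ^ ((j:ℤ)-e+1) / ((j:ℤ)-e+1)) with hF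
  have hne : ∀ x : ℝ, x ∈ Set.uIcc (0:ℝ) 1 → t + x ≠ 0 := by
    intro x hx
    rw [Set.uIcc_of_le (zero_le_one)] at hx
    have := hx.1
    positivity
  have hz : ∀ j, j ∈ Finset.range (p+1) → ((j:ℤ)-e+1 : ℤ) ≠ 0 := by
    intro j hj
    have : j ≤ p := Nat.lt_succ_iff.mp (Finset.mem_range.mp hj)
    omega
  have hderiv : ∀ x ∈ Set.uIcc (0:ℝ) 1,
      HasDerivAt F (x ^ p * (t + x) ^ (-(e:ℤ))) x := by
    intro x hx
    have hne' : t + x ≠ 0 := hne x hx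
    have key : HasDerivAt F
        (∑ j ∈ Finset.range (p+1), (p.choose j : ℝ) * (-t) ^ (p-j) * (t+x) ^ ((j:ℤ)-e)) x := by
      have : ∀ j ∈ Finset.range (p+1), HasDerivAt
          (fun x : ℝ => (p.choose j : ℝ) * (-t) ^ (p-j) * ((t+x) ^ ((j:ℤ)-e+1) / ((j:ℤ)-e+1)))
          ((p.choose j : ℝ) * (-t) ^ (p-j) * (t+x) ^ ((j:ℤ)-e)) x := by
        intro j hj
        have h0 : HasDerivAt (fun x : ℝ => t + x) 1 x := (hasDerivAt_id x).const_add t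
        have h1 := (hasDerivAt_zpow ((j:ℤ)-e+1) (t+x) (Or.inl hne')).comp x h0
        simp only [Function.comp_def] at h1
        have h2 := (h1.div_const ((((j:ℤ)):ℝ) - ((e:ℤ):ℝ) + 1)).const_mul
          ((p.choose j : ℝ) * (-t) ^ (p-j))
        have hzj : (((j:ℤ)):ℝ) - ((e:ℤ):ℝ) + 1 ≠ 0 := by
          have := hz j hj
          intro hc
          exact this (by exact_mod_cast hc)
        rw [show (((e:ℤ)):ℝ) = (e:ℝ) from Int.cast_natCast e] at h2
        refine h2.congr_deriv ?_
        have h3 : ((j:ℤ)-(e:ℤ)+1-1) = (j:ℤ)-e := by ring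
        rw [h3, mul_one]
        rw [Int.cast_add, Int.cast_sub, Int.cast_one, Int.cast_natCast, Int.cast_natCast]
        push_cast at hzj ⊢
        rw [mul_comm ((j:ℝ) - (e:ℝ) + 1), mul_div_cancel_right₀ _ hzj]
      exact HasDerivAt.fun_sum this
    convert key using 1
    have expand : ∀ j : ℤ, (t+x) ^ (j-(e:ℤ)) = (t+x) ^ j * (t+x) ^ (-(e:ℤ)) := by
      intro j
      rw [← zpow_add₀ hne']
      ring_nf
    have : ∑ j ∈ Finset.range (p+1), (p.choose j : ℝ) * (-t) ^ (p-j) * (t+x) ^ ((j:ℤ)-e)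
        = (∑ j ∈ Finset.range (p+1), (t+x) ^ j * (-t) ^ (p-j) * (p.choose j : ℝ)) * (t+x) ^ (-(e:ℤ)) := by
      rw [Finset.sum_mul]
      refine Finset.sum_congr rfl fun j hj => ?_
      rw [expand (j:ℤ), zpow_natCast]
      ring
    rw [this, ← add_pow]
    norm_num
  have hint : IntervalIntegrable (fun x => x ^ p * (t + x) ^ (-(e:ℤ))) volume 0 1 := by
    apply ContinuousOn.intervalIntegrable
    apply ContinuousOn.mul (continuousOn_pow p)
    exact ContinuousOn.zpow₀ (by fun_prop) _ (fun x hx => Or.inl (hne x hx))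
  have := intervalIntegral.integral_eq_sub_of_hasDerivAt hderiv hint
  rw [this, hF]
  rw [← Finset.sum_sub_distrib]
  refine Finset.sum_congr rfl fun j hj => ?_
  rw [add_zero]
  ring

lemma sub_pow_expand (t : ℝ) (a : ℕ) :
    t ^ a = ∑ m ∈ Finset.range (a+1), (a.choose m : ℝ) * (-1) ^ (a-m) * (t+1) ^ m := by
  have h : t = (t+1) + (-1) := by ring
  calc t ^ a = ((t+1) + (-1)) ^ a := by rw [← h]
    _ = ∑ m ∈ Finset.range (a+1), (t+1) ^ m * (-1) ^ (a-m) * (a.choose m : ℝ) := add_pow _ _ _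
    _ = _ := Finset.sum_congr rfl fun m _ => by ring

lemma neg_one_pow_helper (a m : ℕ) (hm : m ≤ a) :
    ((-1:ℝ)) ^ a * (-1) ^ (a-m) = (-1) ^ m := by
  have h : a + (a - m) = 2*(a-m) + m := by omega
  rw [← pow_add, h, pow_add, pow_mul, neg_one_sq, one_pow, one_mul]

lemma neg_final (t : ℝ) (ht : 1 ≤ t) (p e : ℕ) (he : p + 2 ≤ e) :
    ∫ x in (0:ℝ)..1, x ^ p * (t + x) ^ (-(e:ℤ))
      = (∑ j ∈ Finset.range (p+1),
          ((p.choose j : ℝ) * (-1) ^ (p-j+1) / ((j:ℝ)-e+1)) * t ^ ((p:ℤ)-e+1))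
        + ∑ j ∈ Finset.range (p+1), ∑ m ∈ Finset.range (p-j+1),
            ((p.choose j : ℝ) * (((p-j).choose m : ℝ)) * (-1) ^ m / ((j:ℝ)-e+1))
              * (t+1) ^ ((j:ℤ)+m-e+1) := by
  have ht0 : t ≠ 0 := by linarith
  have ht1 : t + 1 ≠ 0 := by linarith
  rw [neg_int t ht p e he, ← Finset.sum_add_distrib]
  refine Finset.sum_congr rfl fun j hj => ?_
  have hjp : j ≤ p := Nat.lt_succ_iff.mp (Finset.mem_range.mp hj)
  have hd : ((j:ℝ) - e + 1) ≠ 0 := by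
    have h1 : (j:ℝ) ≤ p := by exact_mod_cast hjp
    have h2 : (p:ℝ) + 2 ≤ e := by exact_mod_cast he
    nlinarith
  have hS1 : t ^ (p-j) * t ^ ((j:ℤ)-e+1) = t ^ ((p:ℤ)-e+1) := by
    rw [← zpow_natCast t (p-j), ← zpow_add₀ ht0]
    congr 1
    push_cast [Nat.cast_sub hjp]
    ring
  have hS3 : ∀ m : ℕ, (t+1) ^ m * (t+1) ^ ((j:ℤ)-e+1) = (t+1) ^ ((j:ℤ)+m-e+1) := by
    intro m
    rw [← zpow_natCast (t+1) m, ← zpow_add₀ ht1]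
    congr 1
    ring
  calc (p.choose j : ℝ) * (-t) ^ (p-j) *
          (((t+1) ^ ((j:ℤ)-e+1) - t ^ ((j:ℤ)-e+1)) / ((j:ℤ)-e+1))
      = ((p.choose j : ℝ) * (-1) ^ (p-j) / ((j:ℝ)-e+1)) * (t ^ (p-j) * (t+1) ^ ((j:ℤ)-e+1))
        - ((p.choose j : ℝ) * (-1) ^ (p-j) / ((j:ℝ)-e+1)) * (t ^ (p-j) * t ^ ((j:ℤ)-e+1)) := by
        rw [neg_pow]
        push_cast
        ring
    _ = ((p.choose j : ℝ) * (-1) ^ (p-j+1) / ((j:ℝ)-e+1)) * t ^ ((p:ℤ)-e+1)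
        + ((p.choose j : ℝ) * (-1) ^ (p-j) / ((j:ℝ)-e+1)) * (t ^ (p-j) * (t+1) ^ ((j:ℤ)-e+1)) := by
        rw [hS1, pow_succ]
        ring
    _ = _ := by
        congr 1
        rw [sub_pow_expand t (p-j), Finset.sum_mul, Finset.mul_sum]
        refine Finset.sum_congr rfl fun m hm => ?_
        have hma : m ≤ p - j := Nat.lt_succ_iff.mp (Finset.mem_range.mp hm)
        rw [← hS3 m]
        have hsgn := neg_one_pow_helper (p-j) m hma
        linear_combination ((p.choose j : ℝ) * (((p-j).choose m : ℝ)) * (t+1) ^ m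
          * (t+1) ^ ((j:ℤ)-e+1) / ((j:ℝ)-e+1)) * hsgn

-- the symbolic one-variable integration step
def stepT {k : ℕ} (T : Trm (k+1)) : List (Trm k) :=
  if 0 ≤ T.z then
    List.ofFn (n := T.z.toNat + 1) (fun j =>
      ⟨T.q * ((T.z.toNat.choose (j:ℕ) : ℚ)) / ((T.p 0 : ℚ) + ((T.z.toNat - (j:ℕ) : ℕ) : ℚ) + 1),
        T.p ∘ Fin.succ, T.c, ((j:ℕ) : ℤ)⟩)
  else
    (List.ofFn (n := T.p 0 + 1) (fun j =>
      ⟨T.q * (((T.p 0).choose (j:ℕ) : ℚ)) * (-1) ^ ((T.p 0) - (j:ℕ) + 1)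
          / (((j:ℕ):ℚ) + T.z + 1),
        T.p ∘ Fin.succ, T.c, T.z + T.p 0 + 1⟩))
    ++ (List.ofFn (n := T.p 0 + 1) (fun j =>
        List.ofFn (n := T.p 0 - (j:ℕ) + 1) (fun m =>
          ⟨T.q * (((T.p 0).choose (j:ℕ) : ℚ)) * (((T.p 0 - (j:ℕ)).choose (m:ℕ) : ℚ))
              * (-1) ^ (m:ℕ) / (((j:ℕ):ℚ) + T.z + 1),
            T.p ∘ Fin.succ, T.c + 1, T.z + (j:ℕ) + (m:ℕ) + 1⟩))).flatten

lemma stepT_ok {k : ℕ} (T : Trm (k+1)) (h : T.ok) : ∀ T' ∈ stepT T, T'.ok := by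
  obtain ⟨hc, hz⟩ := h
  have hsum : (∑ i : Fin (k+1), (T.p i : ℤ)) = (T.p 0 : ℤ) + ∑ i : Fin k, (T.p (Fin.succ i) : ℤ) :=
    Fin.sum_univ_succ _
  intro T' hT'
  unfold stepT at hT'
  split_ifs at hT' with hzpos
  · rw [List.mem_ofFn] at hT'
    obtain ⟨j, rfl⟩ := hT'
    exact ⟨hc, Or.inl (by positivity)⟩
  · rw [List.mem_append] at hT'
    push_neg at hzpos
    have hz' : T.z + (T.p 0 : ℤ) + ∑ i : Fin k, (T.p (Fin.succ i) : ℤ) + (k+1) + 2 ≤ 0 := by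
      rcases hz with h' | h'
      · omega
      · rw [hsum] at h'
        push_cast at h' ⊢
        omega
    rcases hT' with hT' | hT'
    · rw [List.mem_ofFn] at hT'
      obtain ⟨j, rfl⟩ := hT'
      refine ⟨hc, Or.inr ?_⟩
      show T.z + (T.p 0 : ℤ) + 1 + (∑ i : Fin k, ((T.p ∘ Fin.succ) i : ℤ)) + k + 2 ≤ 0
      have : ∑ i : Fin k, ((T.p ∘ Fin.succ) i : ℤ) = ∑ i : Fin k, (T.p (Fin.succ i) : ℤ) := rfl
      rw [this]
      set A := ∑ i : Fin k, (T.p (Fin.succ i) : ℤ) with hA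
      omega
    · rw [List.mem_flatten] at hT'
      obtain ⟨l, hl, hT'⟩ := hT'
      rw [List.mem_ofFn] at hl
      obtain ⟨j, rfl⟩ := hl
      rw [List.mem_ofFn] at hT'
      obtain ⟨m, rfl⟩ := hT'
      have h1 : (1:ℕ) ≤ T.c + 1 := by omega
      refine ⟨h1, Or.inr ?_⟩
      show T.z + ((j:ℕ):ℤ) + ((m:ℕ):ℤ) + 1 + (∑ i : Fin k, ((T.p ∘ Fin.succ) i : ℤ)) + k + 2 ≤ 0
      have hcmp : ∑ i : Fin k, ((T.p ∘ Fin.succ) i : ℤ) = ∑ i : Fin k, (T.p (Fin.succ i) : ℤ) := rfl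
      rw [hcmp]
      have hj : (j:ℕ) ≤ T.p 0 := Nat.lt_succ_iff.mp j.isLt
      have hm : (m:ℕ) ≤ T.p 0 - (j:ℕ) := Nat.lt_succ_iff.mp m.isLt
      have hjm : ((j:ℕ):ℤ) + ((m:ℕ):ℤ) ≤ (T.p 0 : ℤ) := by
        have : (j:ℕ) + (m:ℕ) ≤ T.p 0 := by omega
        exact_mod_cast this
      omega

lemma stepT_eval {k : ℕ} (T : Trm (k+1)) (hok : T.ok) (y : Fin k → ℝ)
    (hy : ∀ i, 0 ≤ y i) :
    ∫ x in (0:ℝ)..1, T.eval (Fin.cons x y) = evalL (stepT T) y := by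
  have hynn : (0:ℝ) ≤ ∑ i, y i := Finset.sum_nonneg fun i _ => hy i
  have hc1 : (1:ℝ) ≤ (T.c:ℝ) := by exact_mod_cast hok.1
  set t : ℝ := (T.c : ℝ) + ∑ i, y i with htdef
  have ht : 1 ≤ t := by rw [htdef]; linarith
  have ht0 : t ≠ 0 := by linarith
  have hrepr : ∀ x : ℝ, T.eval (Fin.cons x y)
      = ((T.q : ℝ) * ∏ i, y i ^ (T.p (Fin.succ i))) * (x ^ (T.p 0) * (t + x) ^ T.z) := by
    intro x
    have hbase : (T.c:ℝ) + ∑ i, (Fin.cons x y : Fin (k+1) → ℝ) i = t + x := by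
      rw [Fin.sum_cons]
      ring
    rw [Trm.eval, hbase, Fin.prod_univ_succ]
    simp only [Fin.cons_zero, Fin.cons_succ]
    ring
  simp_rw [hrepr]
  rw [intervalIntegral.integral_const_mul]
  by_cases hzpos : 0 ≤ T.z
  · -- positive exponent case
    set m := T.z.toNat with hmdef
    have hzm : T.z = (m:ℤ) := (Int.toNat_of_nonneg hzpos).symm
    rw [stepT, if_pos hzpos, evalL_ofFn, hzm]
    simp only [Int.toNat_natCast]
    simp_rw [zpow_natCast]
    rw [pos_int t (T.p 0) m]
    simp only [Trm.eval, Function.comp_apply]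
    rw [← htdef]
    rw [← Fin.sum_univ_eq_sum_range]
    rw [Finset.mul_sum]
    refine Finset.sum_congr rfl fun j _ => ?_
    have hjm : (j:ℕ) ≤ m := Nat.lt_succ_iff.mp j.isLt
    push_cast [Nat.cast_sub hjm]
    ring_nf
    norm_cast
    ring
  · -- negative exponent case
    push_neg at hzpos
    set e := (-T.z).toNat with hedef
    have hze : T.z = -(e:ℤ) := by omega
    have hsum : (∑ i : Fin (k+1), (T.p i : ℤ)) = (T.p 0 : ℤ) + ∑ i : Fin k, (T.p (Fin.succ i) : ℤ) :=
      Fin.sum_univ_succ _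
    have he : T.p 0 + 2 ≤ e := by
      rcases hok.2 with h' | h'
      · omega
      · rw [hsum] at h'
        have hnn : (0:ℤ) ≤ ∑ i : Fin k, (T.p (Fin.succ i) : ℤ) :=
          Finset.sum_nonneg fun i _ => by positivity
        omega
    rw [stepT, if_neg (by omega), evalL_append, evalL_ofFn, evalL_flatten,
      List.map_ofFn, List.sum_ofFn]
    simp only [Function.comp_def]
    simp_rw [evalL_ofFn]
    rw [hze, neg_final t ht (T.p 0) e he]
    simp only [Trm.eval]
    rw [← htdef]
    simp_rw [← Fin.sum_univ_eq_sum_range]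
    rw [mul_add]
    congr 1
    · rw [Finset.mul_sum]
      refine Finset.sum_congr rfl fun j _ => ?_
      have hexp : -(e:ℤ) + T.p 0 + 1 = (T.p 0 : ℤ) - e + 1 := by ring
      rw [hexp]
      push_cast
      ring
    · rw [Finset.mul_sum]
      refine Finset.sum_congr rfl fun j _ => ?_
      rw [Finset.mul_sum]
      refine Finset.sum_congr rfl fun m' _ => ?_
      have hexp : -(e:ℤ) + ((j:ℕ):ℤ) + ((m':ℕ):ℤ) + 1 = ((j:ℕ):ℤ) + ((m':ℕ):ℤ) - e + 1 := by
        ring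
      rw [hexp]
      have hb : ((T.c + 1 : ℕ) : ℝ) + ∑ i, y i = t + 1 := by
        rw [htdef]
        push_cast
        ring
      rw [hb]
      push_cast
      ring

-- product structure of the cube measure
lemma pi_restrict (k : ℕ) :
    Measure.pi (fun _ : Fin k => (volume : Measure ℝ).restrict (Set.Icc (0:ℝ) 1))
      = (volume : Measure (Fin k → ℝ)).restrict (cube k) := by
  refine Measure.pi_eq fun s hs => ?_
  rw [Measure.restrict_apply (MeasurableSet.univ_pi hs)]
  rw [cube, ← Set.pi_inter_distrib, volume_pi_pi]
  exact Finset.prod_congr rfl fun i _ => (Measure.restrict_apply (hs i)).symm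

instance : IsFiniteMeasure ((volume : Measure ℝ).restrict (Set.Icc (0:ℝ) 1)) := by
  constructor
  rw [Measure.restrict_apply_univ, Real.volume_Icc]
  norm_num

lemma term_integral {k : ℕ} (T : Trm (k+1)) (hok : T.ok) :
    ∫ u in cube (k+1), T.eval u = ∫ y in cube k, evalL (stepT T) y := by
  set μ : Measure ℝ := (volume : Measure ℝ).restrict (Set.Icc (0:ℝ) 1) with hμ
  set e := MeasurableEquiv.piFinSuccAbove (fun _ : Fin (k+1) => ℝ) 0 with he
  have hmp := measurePreserving_piFinSuccAbove (fun _ : Fin (k+1) => μ) 0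
  have hint : Integrable T.eval (Measure.pi fun _ : Fin (k+1) => μ) := by
    rw [hμ, pi_restrict]
    exact T.integrableOn hok.1
  have hcomp : Integrable (T.eval ∘ e.symm)
      (μ.prod (Measure.pi fun _ : Fin k => μ)) :=
    ((hmp.symm e).integrable_comp_emb (MeasurableEquiv.measurableEmbedding _)).mpr hint
  have hsymm : ∀ (x : ℝ) (yv : Fin k → ℝ), e.symm (x, yv) = Fin.cons x yv := by
    intro x yv
    rw [he]
    simp [MeasurableEquiv.piFinSuccAbove_symm_apply, Fin.insertNthEquiv]
  calc ∫ u in cube (k+1), T.eval u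
      = ∫ u, T.eval u ∂(Measure.pi fun _ : Fin (k+1) => μ) := by rw [hμ, pi_restrict]
    _ = ∫ z, T.eval (e.symm z) ∂(μ.prod (Measure.pi fun _ : Fin k => μ)) :=
        ((hmp.symm e).integral_comp (MeasurableEquiv.measurableEmbedding _) _).symm
    _ = ∫ yv, (∫ x, T.eval (e.symm (x, yv)) ∂μ) ∂(Measure.pi fun _ : Fin k => μ) :=
        integral_prod_symm _ hcomp
    _ = ∫ yv, evalL (stepT T) yv ∂(Measure.pi fun _ : Fin k => μ) := by
        rw [hμ, pi_restrict]
        apply setIntegral_congr_fun (measurableSet_cube k)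
        intro yv hyv
        have hy' : ∀ i, 0 ≤ yv i := fun i => (hyv i trivial).1
        have key := stepT_eval T hok yv hy'
        simp only [hsymm]
        rw [← key, intervalIntegral.integral_of_le zero_le_one]
        exact integral_Icc_eq_integral_Ioc
    _ = ∫ y in cube k, evalL (stepT T) y := by rw [hμ, pi_restrict]

lemma volume_cube_zero : (volume : Measure (Fin 0 → ℝ)) (cube 0) = 1 := by
  have h1 : cube 0 = Set.univ := by
    ext u
    simp [cube]
  rw [h1]
  rw [show (volume : Measure (Fin 0 → ℝ)) = Measure.pi (fun _ => volume) from rfl,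
    Measure.pi_univ]
  simp

lemma main (k : ℕ) : ∀ (L : List (Trm k)), (∀ T ∈ L, T.ok) →
    ∃ q : ℚ, ∫ u in cube k, evalL L u = (q : ℝ) := by
  induction k with
  | zero =>
      intro L hL
      refine ⟨(L.map (fun T => T.q * (T.c:ℚ) ^ T.z)).sum, ?_⟩
      have hval : ∀ u : Fin 0 → ℝ,
          evalL L u = (((L.map (fun T => T.q * (T.c:ℚ) ^ T.z)).sum : ℚ) : ℝ) := by
        intro u
        induction L with
        | nil => simp [evalL]
        | cons T L' ihL =>
            rw [evalL_cons, ihL (fun T' hT' => hL T' (by simp [hT']))]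
            · simp only [List.map_cons, List.sum_cons]
              have : T.eval u = ((T.q * (T.c:ℚ) ^ T.z : ℚ) : ℝ) := by
                rw [Trm.eval]
                simp only [Finset.univ_eq_empty, Finset.prod_empty, Finset.sum_empty, add_zero]
                push_cast
                ring
              rw [this]
              push_cast
              ring
      simp only [hval]
      rw [setIntegral_const, measureReal_def, volume_cube_zero]
      simp
  | succ k ih =>
      intro L hL
      induction L with
      | nil =>
          refine ⟨0, ?_⟩
          have : (fun u : Fin (k+1) → ℝ => evalL [] u) = fun _ => (0:ℝ) := rfl
          simp [evalL, this]
      | cons T L' ihL =>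
          obtain ⟨q1, hq1⟩ := ih (stepT T) (stepT_ok T (hL T (by simp)))
          obtain ⟨q2, hq2⟩ := ihL (fun T' hT' => hL T' (by simp [hT']))
          refine ⟨q1 + q2, ?_⟩
          have h1 : IntegrableOn T.eval (cube (k+1)) := T.integrableOn (hL T (by simp)).1
          have h2 : IntegrableOn (evalL L') (cube (k+1)) :=
            evalL_integrableOn L' (fun T' hT' => hL T' (by simp [hT']))
          have hsplit : ∫ u in cube (k+1), evalL (T :: L') u
              = (∫ u in cube (k+1), T.eval u) + ∫ u in cube (k+1), evalL L' u := by
            simp_rw [evalL_cons]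
            exact integral_add h1 h2
          rw [hsplit, term_integral T (hL T (by simp)), hq1, hq2]
          push_cast
          ring

end

end Stmt10Aux

/-- For non-negative integers `n₀, n₁, …, n_k`, the integral
`A(n₀;n₁,…,n_k) = ∫_{[0,1]^k} (∏ u_i^{n_i+1}) / (1 + ∑ u_i)^{∑_{j=0}^k (n_j+2)} ∏ du_i`
is well-defined (the integrand is integrable), finite and positive, and is a rational number. -/
theorem stmt_10 (k : ℕ) (n₀ : ℕ) (n : Fin k → ℕ) :
    IntegrableOn
      (fun u : Fin k → ℝ =>
        (∏ i : Fin k, u i ^ (n i + 1)) /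
          (1 + ∑ i : Fin k, u i) ^ ((n₀ + 2) + ∑ j : Fin k, (n j + 2)))
      (Set.univ.pi fun _ => Set.Icc (0 : ℝ) 1)
    ∧ 0 < (∫ u : Fin k → ℝ in Set.univ.pi (fun _ => Set.Icc (0 : ℝ) 1),
        (∏ i : Fin k, u i ^ (n i + 1)) /
          (1 + ∑ i : Fin k, u i) ^ ((n₀ + 2) + ∑ j : Fin k, (n j + 2)))
    ∧ ∃ q : ℚ, (∫ u : Fin k → ℝ in Set.univ.pi (fun _ => Set.Icc (0 : ℝ) 1),
        (∏ i : Fin k, u i ^ (n i + 1)) /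
          (1 + ∑ i : Fin k, u i) ^ ((n₀ + 2) + ∑ j : Fin k, (n j + 2))) = q := by
  classical
  open Stmt10Aux in
  set N : ℕ := (n₀ + 2) + ∑ j : Fin k, (n j + 2) with hN
  set T0 : Trm k := ⟨1, fun i => n i + 1, 1, -(N : ℤ)⟩ with hT0
  set f : (Fin k → ℝ) → ℝ :=
    fun u => (∏ i : Fin k, u i ^ (n i + 1)) / (1 + ∑ i : Fin k, u i) ^ N with hf
  have hfeq : f = T0.eval := by
    funext u
    rw [hf, hT0, Trm.eval]
    simp only [Nat.cast_one, Rat.cast_one, one_mul]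
    rw [zpow_neg, zpow_natCast, div_eq_mul_inv]
  have hok : T0.ok := by
    refine ⟨le_refl 1, Or.inr ?_⟩
    show -(N : ℤ) + (∑ i : Fin k, ((n i + 1 : ℕ) : ℤ)) + k + 2 ≤ 0
    have e1 : ∑ i : Fin k, ((n i + 1 : ℕ) : ℤ) = (∑ i : Fin k, (n i : ℤ)) + k := by
      push_cast
      rw [Finset.sum_add_distrib]
      simp [Finset.card_univ]
    have e2 : (N : ℤ) = (n₀ : ℤ) + 2 + ((∑ i : Fin k, (n i : ℤ)) + 2 * k) := by
      rw [hN]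
      push_cast
      rw [Finset.sum_add_distrib]
      simp [Finset.card_univ]
      ring
    rw [e1, e2]
    have : (0:ℤ) ≤ n₀ := by positivity
    omega
  have hint : IntegrableOn f (cube k) := by
    rw [hfeq]
    exact T0.integrableOn le_rfl
  have hcube : (Set.univ.pi fun _ : Fin k => Set.Icc (0:ℝ) 1) = cube k := rfl
  refine ⟨hint, ?_, ?_⟩
  · -- positivity
    have h0 : 0 ≤ᵐ[(volume : Measure (Fin k → ℝ)).restrict (cube k)] f := by
      refine ae_restrict_of_forall_mem (measurableSet_cube k) ?_
      intro u hu
      have h1 : ∀ i, 0 ≤ u i := fun i => (hu i trivial).1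
      have h2 : (0:ℝ) ≤ ∑ i, u i := Finset.sum_nonneg fun i _ => h1 i
      rw [hf]
      apply div_nonneg
      · exact Finset.prod_nonneg fun i _ => pow_nonneg (h1 i) _
      · positivity
    rw [hcube]
    rw [setIntegral_pos_iff_support_of_nonneg_ae h0 hint]
    have hsub : (Set.univ.pi fun _ : Fin k => Set.Ioc (0:ℝ) 1)
        ⊆ Function.support f ∩ cube k := by
      intro u hu
      have h1 : ∀ i, 0 < u i := fun i => (hu i trivial).1
      have h2 : ∀ i, u i ≤ 1 := fun i => (hu i trivial).2
      have h3 : (0:ℝ) ≤ ∑ i, u i := Finset.sum_nonneg fun i _ => (h1 i).le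
      constructor
      · apply Function.mem_support.mpr
        have : 0 < f u := by
          rw [hf]
          apply div_pos
          · exact Finset.prod_pos fun i _ => pow_pos (h1 i) _
          · positivity
        exact ne_of_gt this
      · exact fun i _ => ⟨(h1 i).le, h2 i⟩
    have hvol : (volume : Measure (Fin k → ℝ))
        (Set.univ.pi fun _ : Fin k => Set.Ioc (0:ℝ) 1) = 1 := by
      rw [volume_pi_pi]
      simp [Real.volume_Ioc]
    calc (0 : ENNReal) < 1 := by norm_num
      _ = (volume : Measure (Fin k → ℝ)) (Set.univ.pi fun _ : Fin k => Set.Ioc (0:ℝ) 1) :=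
          hvol.symm
      _ ≤ (volume : Measure (Fin k → ℝ)) (Function.support f ∩ cube k) := measure_mono hsub
  · -- rationality
    obtain ⟨q, hq⟩ := main k [T0] (by
      intro T' hT'
      simp only [List.mem_singleton] at hT'
      subst hT'
      exact hok)
    refine ⟨q, ?_⟩
    rw [hcube, ← hq]
    apply setIntegral_congr_fun (measurableSet_cube k)
    intro u _
    show f u = evalL [T0] u
    rw [hfeq]
    simp [evalL]
end

section
/- For fixed L > 0 and b ∈ ℝ, one has ∑_{n∈ℤ} (1/√(4πL̃)) (b−n)²/L̃ · e^{-(b−n)²/(4L̃)} = 2 ∑_{m∈ℤ} (1 − 8L̃π²m²) e^{-4π²m²L̃ + 2πimb} for L̃ > 0, and hence lim_{L̃→∞} ∑_{n∈ℤ} (1/√(4πL̃)) (b−n)²/L̃ · e^{-(b−n)²/(4L̃)} = 2. -/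
open Real Filter Complex
open MeasureTheory FourierTransform Topology

-- basic pointwise bounds
lemma aux_sq_exp {s : ℝ} (hs : 0 < s) (x : ℝ) : x ^ 2 * rexp (-s * x ^ 2) ≤ 1 / s := by
  have h1 : s * x ^ 2 ≤ rexp (s * x ^ 2) := by
    have := Real.add_one_le_exp (s * x ^ 2); nlinarith
  have h2 : rexp (-s * x ^ 2) = (rexp (s * x ^ 2))⁻¹ := by
    rw [← Real.exp_neg]; ring_nf
  have hep : 0 < rexp (s * x ^ 2) := Real.exp_pos _
  rw [h2, div_eq_mul_inv, one_mul]
  have hx2 : x ^ 2 ≤ rexp (s * x ^ 2) / s := by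
    rw [le_div_iff₀ hs]; nlinarith
  calc x ^ 2 * (rexp (s * x ^ 2))⁻¹ ≤ (rexp (s * x ^ 2) / s) * (rexp (s * x ^ 2))⁻¹ := by gcongr
    _ = s⁻¹ := by field_simp

lemma aux_abs_exp {s : ℝ} (hs : 0 < s) (x : ℝ) : |x| * rexp (-s * x ^ 2) ≤ 1 + 1 / s := by
  have h0 : |x| ≤ 1 + x ^ 2 := by nlinarith [abs_nonneg x, _root_.sq_abs x, sq_nonneg (|x| - 1)]
  have he : rexp (-s * x ^ 2) ≤ 1 := by
    apply Real.exp_le_one_iff.mpr; nlinarith [sq_nonneg x]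
  have := aux_sq_exp hs x
  have hep : 0 < rexp (-s * x ^ 2) := Real.exp_pos _
  nlinarith

-- pointwise bound: sq * gaussian ≤ const * half gaussian
lemma aux_sq_exp' {r : ℝ} (hr : 0 < r) (x : ℝ) :
    x ^ 2 * rexp (-r * x ^ 2) ≤ (2 / r) * rexp (-(r / 2) * x ^ 2) := by
  have h : rexp (-r * x ^ 2) = rexp (-(r / 2) * x ^ 2) * rexp (-(r / 2) * x ^ 2) := by
    rw [← Real.exp_add]; ring_nf
  rw [h, ← mul_assoc]
  have := aux_sq_exp (by positivity : (0:ℝ) < r / 2) x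
  have hep : 0 < rexp (-(r / 2) * x ^ 2) := Real.exp_pos _
  have h2 : 1 / (r / 2) = 2 / r := by field_simp
  nlinarith

lemma aux_abs_exp' {r : ℝ} (hr : 0 < r) (x : ℝ) :
    |x| * rexp (-r * x ^ 2) ≤ (1 + 2 / r) * rexp (-(r / 2) * x ^ 2) := by
  have h : rexp (-r * x ^ 2) = rexp (-(r / 2) * x ^ 2) * rexp (-(r / 2) * x ^ 2) := by
    rw [← Real.exp_add]; ring_nf
  rw [h, ← mul_assoc]
  have := aux_abs_exp (by positivity : (0:ℝ) < r / 2) x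
  have hep : 0 < rexp (-(r / 2) * x ^ 2) := Real.exp_pos _
  have h2 : 1 / (r / 2) = 2 / r := by field_simp
  nlinarith [abs_nonneg x]

-- norm of complex gaussian with real-cast argument
lemma aux_norm_cexp_real (t : ℝ) : ‖Complex.exp ((t : ℂ))‖ = rexp t := by
  rw [Complex.norm_exp, Complex.ofReal_re]

-- big O lemma: (α + β x²) e^{-r x²} = O(|x|^{-2}) on cocompact
lemma aux_bigO {r : ℝ} (hr : 0 < r) (α β : ℂ) :
    (fun x : ℝ => (α + β * (x : ℂ) ^ 2) * Complex.exp (-(r : ℂ) * (x : ℂ) ^ 2))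
      =O[cocompact ℝ] (|·| ^ (-2 : ℝ)) := by
  have hre : 0 < ((r / 2 : ℝ) : ℂ).re := by simpa using by positivity
  have hhalf : (fun x : ℝ => Complex.exp (-((r / 2 : ℝ) : ℂ) * (x : ℂ) ^ 2))
      =O[cocompact ℝ] (|·| ^ (-2 : ℝ)) :=
    (isLittleO_exp_neg_mul_sq_cocompact hre (-2)).isBigO
  have hnorm : ∀ x : ℝ, ‖Complex.exp (-(r : ℂ) * (x : ℂ) ^ 2)‖ = rexp (-r * x ^ 2) := by
    intro x
    rw [show (-(r : ℂ) * (x : ℂ) ^ 2) = ((-r * x ^ 2 : ℝ) : ℂ) by push_cast; ring,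
      aux_norm_cexp_real]
  have hnorm2 : ∀ x : ℝ, ‖Complex.exp (-((r / 2 : ℝ) : ℂ) * (x : ℂ) ^ 2)‖
      = rexp (-(r / 2) * x ^ 2) := by
    intro x
    rw [show (-((r / 2 : ℝ) : ℂ) * (x : ℂ) ^ 2) = ((-(r / 2) * x ^ 2 : ℝ) : ℂ) by
      push_cast; ring, aux_norm_cexp_real]
  have hb : (fun x : ℝ => (α + β * (x : ℂ) ^ 2) * Complex.exp (-(r : ℂ) * (x : ℂ) ^ 2))
      =O[cocompact ℝ] (fun x : ℝ => Complex.exp (-((r / 2 : ℝ) : ℂ) * (x : ℂ) ^ 2)) := by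
    apply Asymptotics.IsBigO.of_bound (‖α‖ + ‖β‖ * (2 / r))
    filter_upwards with x
    rw [norm_mul, hnorm, hnorm2]
    have h1 : ‖α + β * (x : ℂ) ^ 2‖ ≤ ‖α‖ + ‖β‖ * x ^ 2 := by
      refine (norm_add_le _ _).trans ?_
      gcongr
      rw [norm_mul, norm_pow]
      simp [Complex.norm_real, _root_.abs_of_nonneg, sq_abs]
    have hexp : 0 ≤ rexp (-r * x ^ 2) := (Real.exp_pos _).le
    have hexp2 : 0 < rexp (-(r / 2) * x ^ 2) := Real.exp_pos _
    have key : x ^ 2 * rexp (-r * x ^ 2) ≤ (2 / r) * rexp (-(r / 2) * x ^ 2) :=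
      aux_sq_exp' hr x
    have key2 : rexp (-r * x ^ 2) ≤ rexp (-(r / 2) * x ^ 2) := by
      apply Real.exp_le_exp.mpr; nlinarith [sq_nonneg x]
    calc ‖α + β * (x : ℂ) ^ 2‖ * rexp (-r * x ^ 2)
        ≤ (‖α‖ + ‖β‖ * x ^ 2) * rexp (-r * x ^ 2) := by gcongr
      _ = ‖α‖ * rexp (-r * x ^ 2) + ‖β‖ * (x ^ 2 * rexp (-r * x ^ 2)) := by ring
      _ ≤ ‖α‖ * rexp (-(r / 2) * x ^ 2) + ‖β‖ * ((2 / r) * rexp (-(r / 2) * x ^ 2)) := by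
          gcongr <;> positivity
      _ = (‖α‖ + ‖β‖ * (2 / r)) * rexp (-(r / 2) * x ^ 2) := by ring
  exact hb.trans hhalf

-- Fourier integral is linear w.r.t. complex constant multiples
lemma aux_fourier_const_mul (k : ℂ) (g : ℝ → ℂ) :
    𝓕 (fun x => k * g x) = fun w => k * 𝓕 g w := by
  have : (fun x => k * g x) = k • g := by ext x; simp [Pi.smul_apply, smul_eq_mul]
  rw [this]
  ext w
  rw [show (𝓕 (k • g) : ℝ → ℂ) = k • 𝓕 g from ?_]
  · simp [Pi.smul_apply, smul_eq_mul]
  · exact VectorFourier.fourierIntegral_const_smul _ _ _ _ _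

section withL
variable {L : ℝ}

-- the basic gaussian
noncomputable def g0 (L : ℝ) : ℝ → ℂ := fun x => Complex.exp (-(π : ℂ) * ((1 / (4 * π * L) : ℝ) : ℂ) * (x : ℂ) ^ 2)

lemma g0_eq (hL : 0 < L) (x : ℝ) : g0 L x = ((rexp (-(1 / (4 * L)) * x ^ 2) : ℝ) : ℂ) := by
  rw [g0, Complex.ofReal_exp]
  congr 1
  have hπ : (π : ℂ) ≠ 0 := Complex.ofReal_ne_zero.mpr Real.pi_ne_zero
  have hLc : (L : ℂ) ≠ 0 := Complex.ofReal_ne_zero.mpr hL.ne'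
  push_cast
  field_simp

lemma g0_cont : Continuous (g0 L) := by
  unfold g0; fun_prop

lemma g0_norm (hL : 0 < L) (x : ℝ) : ‖g0 L x‖ = rexp (-(1 / (4 * L)) * x ^ 2) := by
  rw [g0_eq hL, Complex.norm_real, Real.norm_eq_abs, abs_of_pos (Real.exp_pos _)]

lemma g0_int (hL : 0 < L) : Integrable (g0 L) := by
  have h : 0 < ((π : ℂ) * ((1 / (4 * π * L) : ℝ) : ℂ)).re := by
    rw [show ((π : ℂ) * ((1 / (4 * π * L) : ℝ) : ℂ)) = ((π * (1 / (4 * π * L)) : ℝ) : ℂ) by push_cast; ring]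
    rw [Complex.ofReal_re]
    have hπ : (0:ℝ) < π := Real.pi_pos
    positivity
  have := integrable_cexp_quadratic h 0 0
  apply this.congr'
  · exact g0_cont.aestronglyMeasurable
  · filter_upwards with x
    unfold g0
    ring_nf

lemma g1_int (hL : 0 < L) : Integrable (fun x : ℝ => x • g0 L x) := by
  have hr : (0:ℝ) < 1 / (4 * L) := by positivity
  refine Integrable.mono' (((integrable_exp_neg_mul_sq (show (0:ℝ) < (1 / (4 * L)) / 2 by positivity)).const_mul
    (1 + 2 / (1 / (4 * L))))) ?_ ?_
  · exact (continuous_id.smul g0_cont).aestronglyMeasurable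
  · filter_upwards with x
    rw [norm_smul, Real.norm_eq_abs, g0_norm hL]
    exact aux_abs_exp' hr x

lemma g2_int (hL : 0 < L) : Integrable (fun x : ℝ => x • (x • g0 L x)) := by
  have hr : (0:ℝ) < 1 / (4 * L) := by positivity
  refine Integrable.mono' (((integrable_exp_neg_mul_sq (show (0:ℝ) < (1 / (4 * L)) / 2 by positivity)).const_mul
    (2 / (1 / (4 * L))))) ?_ ?_
  · exact (continuous_id.smul (continuous_id.smul g0_cont)).aestronglyMeasurable
  · filter_upwards with x
    rw [norm_smul, norm_smul, Real.norm_eq_abs, g0_norm hL, ← mul_assoc]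
    have : |x| * |x| = x ^ 2 := by rw [← abs_mul, ← sq]; exact abs_sq x
    rw [this]
    exact aux_sq_exp' hr x

end withL

section FT
variable {L : ℝ}

-- Fourier transform of g0
lemma Fg0 (hL : 0 < L) : 𝓕 (g0 L) = fun ξ : ℝ =>
    ((Real.sqrt (4 * π * L) : ℝ) : ℂ) * Complex.exp (-((4 * π ^ 2 * L : ℝ) : ℂ) * (ξ : ℂ) ^ 2) := by
  have hπ : (0:ℝ) < π := Real.pi_pos
  have ha : 0 < (((1 / (4 * π * L) : ℝ) : ℂ)).re := by
    rw [Complex.ofReal_re]; positivity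
  have h := fourier_gaussian_pi ha
  rw [show (fun x : ℝ => Complex.exp (-(π:ℂ) * ((1 / (4 * π * L) : ℝ) : ℂ) * (x:ℂ) ^ 2)) = g0 L from rfl] at h
  rw [h]
  funext t
  have h1 : (((1 / (4 * π * L) : ℝ) : ℂ)) ^ (1 / 2 : ℂ) = ((Real.sqrt (1 / (4 * π * L)) : ℝ) : ℂ) := by
    rw [show (1/2 : ℂ) = ((1/2 : ℝ) : ℂ) by norm_num]
    rw [← Complex.ofReal_cpow (by positivity)]
    rw [← Real.sqrt_eq_rpow]
  have hs : Real.sqrt (1 / (4 * π * L)) = 1 / Real.sqrt (4 * π * L) := by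
    rw [one_div, Real.sqrt_inv, one_div]
  have hs' : (0:ℝ) < Real.sqrt (4 * π * L) := Real.sqrt_pos.mpr (by positivity)
  have h2 : (1 : ℂ) / (((1 / (4 * π * L) : ℝ) : ℂ)) ^ (1 / 2 : ℂ)
      = ((Real.sqrt (4 * π * L) : ℝ) : ℂ) := by
    rw [h1, hs]
    push_cast
    rw [one_div, one_div, inv_inv]
  have h3 : -(π:ℂ) / (((1 / (4 * π * L) : ℝ) : ℂ)) = -((4 * π ^ 2 * L : ℝ) : ℂ) := by
    have hπ' : ((π:ℝ):ℂ) ≠ 0 := Complex.ofReal_ne_zero.mpr Real.pi_ne_zero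
    have hLc : ((L:ℝ):ℂ) ≠ 0 := Complex.ofReal_ne_zero.mpr hL.ne'
    push_cast
    field_simp
  rw [h2, h3]
end FT

section FT2
variable {L : ℝ}

lemma Fg1 (hL : 0 < L) : 𝓕 (fun x : ℝ => x • g0 L x) = fun ξ : ℝ =>
    (((Real.sqrt (4 * π * L) : ℝ) : ℂ) * ((4 * π ^ 2 * L : ℝ) : ℂ) / ((π : ℂ) * Complex.I)) *
      ((ξ : ℂ) * Complex.exp (-((4 * π ^ 2 * L : ℝ) : ℂ) * (ξ : ℂ) ^ 2)) := by
  set c : ℂ := ((Real.sqrt (4 * π * L) : ℝ) : ℂ) with hc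
  set d : ℂ := ((4 * π ^ 2 * L : ℝ) : ℂ) with hd
  have key : ∀ ξ : ℝ, HasDerivAt (𝓕 (g0 L))
      (𝓕 (fun x : ℝ => (-2 * (π:ℂ) * Complex.I * (x:ℂ)) • g0 L x) ξ) ξ :=
    fun ξ => Real.hasDerivAt_fourier (g0_int hL) (g1_int hL) ξ
  have expl : ∀ ξ : ℝ, HasDerivAt (𝓕 (g0 L))
      (c * (Complex.exp (-d * (ξ:ℂ) ^ 2) * (-d * (2 * (ξ:ℂ))))) ξ := by
    intro ξ
    rw [Fg0 hL]
    have hp : HasDerivAt (fun w : ℂ => -d * w ^ 2) (-d * (2 * (ξ:ℂ))) ((ξ:ℝ):ℂ) := by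
      simpa using (hasDerivAt_pow 2 ((ξ:ℝ):ℂ)).const_mul (-d)
    exact ((hp.cexp).const_mul c).comp_ofReal
  have e1 : ∀ ξ : ℝ, 𝓕 (fun x : ℝ => (-2 * (π:ℂ) * Complex.I * (x:ℂ)) • g0 L x) ξ
      = c * (Complex.exp (-d * (ξ:ℂ) ^ 2) * (-d * (2 * (ξ:ℂ)))) :=
    fun ξ => (key ξ).unique (expl ξ)
  have rewr : (fun x : ℝ => (-2 * (π:ℂ) * Complex.I * (x:ℂ)) • g0 L x)
      = fun x : ℝ => (-2 * (π:ℂ) * Complex.I) * (x • g0 L x) := by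
    ext x
    rw [smul_eq_mul, Complex.real_smul]
    ring
  have e2 : ∀ ξ : ℝ, (-2 * (π:ℂ) * Complex.I) * 𝓕 (fun x : ℝ => x • g0 L x) ξ
      = c * (Complex.exp (-d * (ξ:ℂ) ^ 2) * (-d * (2 * (ξ:ℂ)))) := by
    intro ξ
    rw [← congrFun (aux_fourier_const_mul (-2 * (π:ℂ) * Complex.I) (fun x : ℝ => x • g0 L x)) ξ,
      ← rewr, e1]
  funext ξ
  have hA : (-2 * (π:ℂ) * Complex.I) ≠ 0 := by
    simp [Complex.ofReal_ne_zero, Real.pi_ne_zero, Complex.I_ne_zero]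
  apply mul_left_cancel₀ hA
  rw [e2 ξ]
  have hπc : ((π:ℝ):ℂ) ≠ 0 := Complex.ofReal_ne_zero.mpr Real.pi_ne_zero
  field_simp
end FT2

section FT3
variable {L : ℝ}

lemma Fg2 (hL : 0 < L) : 𝓕 (fun x : ℝ => x • (x • g0 L x)) = fun ξ : ℝ =>
    (((Real.sqrt (4 * π * L) : ℝ) : ℂ) * ((4 * π ^ 2 * L : ℝ) : ℂ) / (2 * (π : ℂ) ^ 2)) *
      ((1 - 2 * ((4 * π ^ 2 * L : ℝ) : ℂ) * (ξ : ℂ) ^ 2) *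
        Complex.exp (-((4 * π ^ 2 * L : ℝ) : ℂ) * (ξ : ℂ) ^ 2)) := by
  set c : ℂ := ((Real.sqrt (4 * π * L) : ℝ) : ℂ) with hc
  set d : ℂ := ((4 * π ^ 2 * L : ℝ) : ℂ) with hd
  set k : ℂ := c * d / ((π : ℂ) * Complex.I) with hk
  have key : ∀ ξ : ℝ, HasDerivAt (𝓕 (fun x : ℝ => x • g0 L x))
      (𝓕 (fun x : ℝ => (-2 * (π:ℂ) * Complex.I * (x:ℂ)) • (x • g0 L x)) ξ) ξ :=
    fun ξ => Real.hasDerivAt_fourier (g1_int hL) (g2_int hL) ξ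
  have expl : ∀ ξ : ℝ, HasDerivAt (𝓕 (fun x : ℝ => x • g0 L x))
      (k * (1 * Complex.exp (-d * (ξ:ℂ) ^ 2) +
        (ξ:ℂ) * (Complex.exp (-d * (ξ:ℂ) ^ 2) * (-d * (2 * (ξ:ℂ)))))) ξ := by
    intro ξ
    rw [Fg1 hL]
    have hp : HasDerivAt (fun w : ℂ => -d * w ^ 2) (-d * (2 * (ξ:ℂ))) ((ξ:ℝ):ℂ) := by
      simpa using (hasDerivAt_pow 2 ((ξ:ℝ):ℂ)).const_mul (-d)
    have hw : HasDerivAt (fun w : ℂ => w * Complex.exp (-d * w ^ 2))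
        (1 * Complex.exp (-d * (ξ:ℂ) ^ 2) +
          (ξ:ℂ) * (Complex.exp (-d * (ξ:ℂ) ^ 2) * (-d * (2 * (ξ:ℂ))))) ((ξ:ℝ):ℂ) :=
      (hasDerivAt_id _).mul hp.cexp
    exact ((hw.const_mul k).comp_ofReal)
  have e1 : ∀ ξ : ℝ, 𝓕 (fun x : ℝ => (-2 * (π:ℂ) * Complex.I * (x:ℂ)) • (x • g0 L x)) ξ
      = k * (1 * Complex.exp (-d * (ξ:ℂ) ^ 2) +
        (ξ:ℂ) * (Complex.exp (-d * (ξ:ℂ) ^ 2) * (-d * (2 * (ξ:ℂ))))) :=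
    fun ξ => (key ξ).unique (expl ξ)
  have rewr : (fun x : ℝ => (-2 * (π:ℂ) * Complex.I * (x:ℂ)) • (x • g0 L x))
      = fun x : ℝ => (-2 * (π:ℂ) * Complex.I) * (x • (x • g0 L x)) := by
    ext x
    simp only [smul_eq_mul, Complex.real_smul]
    ring
  have e2 : ∀ ξ : ℝ, (-2 * (π:ℂ) * Complex.I) * 𝓕 (fun x : ℝ => x • (x • g0 L x)) ξ
      = k * (1 * Complex.exp (-d * (ξ:ℂ) ^ 2) +
        (ξ:ℂ) * (Complex.exp (-d * (ξ:ℂ) ^ 2) * (-d * (2 * (ξ:ℂ))))) := by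
    intro ξ
    rw [← congrFun (aux_fourier_const_mul (-2 * (π:ℂ) * Complex.I)
        (fun x : ℝ => x • (x • g0 L x))) ξ, ← rewr, e1]
  funext ξ
  have hA : (-2 * (π:ℂ) * Complex.I) ≠ 0 := by
    simp [Complex.ofReal_ne_zero, Real.pi_ne_zero, Complex.I_ne_zero]
  apply mul_left_cancel₀ hA
  rw [e2 ξ, hk]
  have hπc : ((π:ℝ):ℂ) ≠ 0 := Complex.ofReal_ne_zero.mpr Real.pi_ne_zero
  have hI : Complex.I ≠ 0 := Complex.I_ne_zero
  field_simp
  ring_nf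
  simp only [Complex.I_sq]
  ring
end FT3

section FT4
variable {L : ℝ}

lemma Fmain (hL : 0 < L) :
    𝓕 (fun x : ℝ => (((1 / Real.sqrt (4 * π * L)) * (x ^ 2 / L) *
        rexp (-x ^ 2 / (4 * L)) : ℝ) : ℂ))
    = fun ξ : ℝ => 2 * ((1 - 8 * L * π ^ 2 * ξ ^ 2 : ℝ) : ℂ) *
        Complex.exp (-((4 * π ^ 2 * L : ℝ) : ℂ) * (ξ : ℂ) ^ 2) := by
  have hπ : (0:ℝ) < π := Real.pi_pos
  have hs' : (0:ℝ) < Real.sqrt (4 * π * L) := Real.sqrt_pos.mpr (by positivity)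
  have hfeq : (fun x : ℝ => (((1 / Real.sqrt (4 * π * L)) * (x ^ 2 / L) *
      rexp (-x ^ 2 / (4 * L)) : ℝ) : ℂ))
      = fun x : ℝ => ((1 / (Real.sqrt (4 * π * L) * L) : ℝ) : ℂ) * (x • (x • g0 L x)) := by
    ext x
    rw [show -x ^ 2 / (4 * L) = -(1 / (4 * L)) * x ^ 2 by ring]
    rw [show (x : ℝ) • ((x : ℝ) • g0 L x) = ((x:ℝ):ℂ) * (((x:ℝ):ℂ) * g0 L x) by
      simp only [Complex.real_smul]]
    rw [g0_eq hL]
    push_cast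
    ring
  rw [hfeq, aux_fourier_const_mul ((1 / (Real.sqrt (4 * π * L) * L) : ℝ) : ℂ)
    (fun x : ℝ => x • (x • g0 L x)), Fg2 hL]
  funext ξ
  have hsq : ((Real.sqrt (4 * π * L) : ℝ) : ℂ) ^ 2 = ((4 * π * L : ℝ) : ℂ) := by
    rw [← Complex.ofReal_pow, Real.sq_sqrt (by positivity)]
  have hπc : ((π:ℝ):ℂ) ≠ 0 := Complex.ofReal_ne_zero.mpr Real.pi_ne_zero
  have hLc : ((L:ℝ):ℂ) ≠ 0 := Complex.ofReal_ne_zero.mpr hL.ne'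
  have hsc : ((Real.sqrt (4 * π * L) : ℝ) : ℂ) ≠ 0 := Complex.ofReal_ne_zero.mpr hs'.ne'
  have hcoef : ((1 / (Real.sqrt (4 * π * L) * L) : ℝ) : ℂ) *
      (((Real.sqrt (4 * π * L) : ℝ) : ℂ) * ((4 * π ^ 2 * L : ℝ) : ℂ) / (2 * (π : ℂ) ^ 2))
      = 2 := by
    have hRe : (1 / (Real.sqrt (4 * π * L) * L)) *
        (Real.sqrt (4 * π * L) * (4 * π ^ 2 * L) / (2 * π ^ 2)) = (2:ℝ) := by
      field_simp
      ring
    exact_mod_cast hRe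
  have hcast : (1 - 2 * ((4 * π ^ 2 * L : ℝ) : ℂ) * (ξ : ℂ) ^ 2)
      = ((1 - 8 * L * π ^ 2 * ξ ^ 2 : ℝ) : ℂ) := by
    push_cast
    ring
  rw [← mul_assoc, hcoef, hcast]
  ring
end FT4

section Ident
variable {L : ℝ}

lemma f_cont (hL : 0 < L) : Continuous (fun x : ℝ =>
    (((1 / Real.sqrt (4 * π * L)) * (x ^ 2 / L) * rexp (-x ^ 2 / (4 * L)) : ℝ) : ℂ)) := by
  apply Complex.continuous_ofReal.comp
  fun_prop

lemma f_decay (hL : 0 < L) : (fun x : ℝ =>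
    (((1 / Real.sqrt (4 * π * L)) * (x ^ 2 / L) * rexp (-x ^ 2 / (4 * L)) : ℝ) : ℂ))
    =O[cocompact ℝ] (|·| ^ (-2 : ℝ)) := by
  have hr : (0:ℝ) < 1 / (4 * L) := by positivity
  have heq : (fun x : ℝ =>
      (((1 / Real.sqrt (4 * π * L)) * (x ^ 2 / L) * rexp (-x ^ 2 / (4 * L)) : ℝ) : ℂ))
      = fun x : ℝ => ((0:ℂ) + ((1 / (Real.sqrt (4 * π * L) * L) : ℝ) : ℂ) * (x:ℂ) ^ 2) *
          Complex.exp (-((1 / (4 * L) : ℝ) : ℂ) * (x:ℂ) ^ 2) := by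
    ext x
    rw [show (-((1 / (4 * L) : ℝ) : ℂ) * (x:ℂ) ^ 2) = ((-x ^ 2 / (4 * L) : ℝ) : ℂ) by
      push_cast; ring]
    rw [← Complex.ofReal_exp]
    push_cast
    ring
  rw [heq]
  exact aux_bigO hr _ _

lemma Ff_decay (hL : 0 < L) : (𝓕 (fun x : ℝ =>
    (((1 / Real.sqrt (4 * π * L)) * (x ^ 2 / L) * rexp (-x ^ 2 / (4 * L)) : ℝ) : ℂ)))
    =O[cocompact ℝ] (|·| ^ (-2 : ℝ)) := by
  have hπ : (0:ℝ) < π := Real.pi_pos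
  have hr : (0:ℝ) < 4 * π ^ 2 * L := by positivity
  rw [Fmain hL]
  have heq : (fun ξ : ℝ => 2 * ((1 - 8 * L * π ^ 2 * ξ ^ 2 : ℝ) : ℂ) *
      Complex.exp (-((4 * π ^ 2 * L : ℝ) : ℂ) * (ξ : ℂ) ^ 2))
      = fun ξ : ℝ => ((2:ℂ) + ((-16 * L * π ^ 2 : ℝ) : ℂ) * (ξ:ℂ) ^ 2) *
          Complex.exp (-((4 * π ^ 2 * L : ℝ) : ℂ) * (ξ:ℂ) ^ 2) := by
    ext ξ
    push_cast
    ring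
  rw [heq]
  exact aux_bigO hr _ _

lemma ident (b : ℝ) (hL : 0 < L) :
    ((∑' n : ℤ, (1 / Real.sqrt (4 * π * L)) * ((b - n) ^ 2 / L) *
        rexp (-(b - n) ^ 2 / (4 * L)) : ℝ) : ℂ)
      = 2 * ∑' m : ℤ, ((1 - 8 * L * π ^ 2 * (m : ℝ) ^ 2 : ℝ) : ℂ) *
          Complex.exp (-(4 * π ^ 2 * (m : ℂ) ^ 2 * L) + 2 * π * Complex.I * m * b) := by
  set f : ℝ → ℂ := fun x : ℝ =>
    (((1 / Real.sqrt (4 * π * L)) * (x ^ 2 / L) * rexp (-x ^ 2 / (4 * L)) : ℝ) : ℂ) with hf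
  have poisson := Real.tsum_eq_tsum_fourier_of_rpow_decay (f_cont hL) one_lt_two
    (f_decay hL) (Ff_decay hL) b
  have lhs : ((∑' n : ℤ, (1 / Real.sqrt (4 * π * L)) * ((b - n) ^ 2 / L) *
      rexp (-(b - n) ^ 2 / (4 * L)) : ℝ) : ℂ) = ∑' n : ℤ, f (b + n) := by
    rw [Complex.ofReal_tsum]
    rw [← (Equiv.neg ℤ).tsum_eq (fun n : ℤ => f (b + n))]
    apply tsum_congr
    intro n
    show _ = f (b + ↑(-n))
    rw [hf]
    push_cast
    ring_nf
  rw [lhs, poisson]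
  rw [← tsum_mul_left]
  apply tsum_congr
  intro m
  rw [congrFun (Fmain hL) ((m : ℤ) : ℝ), fourier_coe_apply, Complex.exp_add]
  push_cast
  ring_nf
end Ident

section Limit

noncomputable def trm (b L : ℝ) (m : ℤ) : ℂ :=
  ((1 - 8 * L * π ^ 2 * (m : ℝ) ^ 2 : ℝ) : ℂ) *
    Complex.exp (-(4 * π ^ 2 * (m : ℂ) ^ 2 * L) + 2 * π * Complex.I * m * b)

lemma norm_trm (b L : ℝ) (m : ℤ) :
    ‖trm b L m‖ = |1 - 8 * L * π ^ 2 * (m : ℝ) ^ 2| * rexp (-(4 * π ^ 2 * (m : ℝ) ^ 2 * L)) := by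
  rw [trm, norm_mul, Complex.norm_real, Real.norm_eq_abs]
  congr 1
  rw [show (-(4 * π ^ 2 * (m : ℂ) ^ 2 * L) + 2 * π * Complex.I * (m : ℂ) * b)
      = ((-(4 * π ^ 2 * (m : ℝ) ^ 2 * L) : ℝ) : ℂ) + ((2 * π * (m : ℝ) * b : ℝ) : ℂ) * Complex.I
      by push_cast; ring]
  rw [Complex.exp_add, norm_mul, Complex.norm_exp,
    Complex.norm_exp_ofReal_mul_I, mul_one, Complex.ofReal_re]

lemma natsum : Summable (fun n : ℕ => (n : ℝ) ^ 2 * rexp (-(n : ℝ) ^ 2)) := by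
  have hr : ‖rexp (-1)‖ < 1 := by
    rw [Real.norm_eq_abs, abs_of_pos (Real.exp_pos _)]
    exact Real.exp_lt_one_iff.mpr (by norm_num)
  apply Summable.of_nonneg_of_le (fun n => by positivity) (fun n => ?_)
    (summable_pow_mul_geometric_of_norm_lt_one 2 hr)
  have h1 : rexp (-1) ^ n = rexp (-(n : ℝ)) := by
    rw [← Real.exp_nat_mul]
    ring_nf
  rw [h1]
  have h2 : rexp (-(n : ℝ) ^ 2) ≤ rexp (-(n : ℝ)) := by
    apply Real.exp_le_exp.mpr
    rcases Nat.eq_zero_or_pos n with h | h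
    · simp [h]
    · have h1n : (1:ℝ) ≤ (n:ℝ) := by exact_mod_cast h
      nlinarith
  exact mul_le_mul_of_nonneg_left h2 (by positivity)

lemma intsum : Summable (fun m : ℤ => (m : ℝ) ^ 2 * rexp (-(m : ℝ) ^ 2)) := by
  apply Summable.of_nat_of_neg_add_one
  · exact_mod_cast natsum
  · have h := (summable_nat_add_iff 1).mpr natsum
    apply h.congr
    intro n
    push_cast
    ring_nf

noncomputable def bnd (m : ℤ) : ℝ :=
  (if m = 0 then (1:ℝ) else 0) + 8 * π ^ 2 * ((m : ℝ) ^ 2 * rexp (-(m : ℝ) ^ 2))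

lemma bnd_summable : Summable bnd := by
  apply Summable.add
  · apply summable_of_ne_finset_zero (s := ({0} : Finset ℤ))
    intro m hm
    simp only [Finset.mem_singleton] at hm
    simp [hm]
  · exact intsum.mul_left _

lemma trm_le_bnd (b : ℝ) {L : ℝ} (hL : 1 ≤ L) (m : ℤ) : ‖trm b L m‖ ≤ bnd m := by
  have hπ : (3:ℝ) < π := Real.pi_gt_three
  have hπ2 : (9:ℝ) ≤ π ^ 2 := by nlinarith
  rw [norm_trm, bnd]
  rcases eq_or_ne m 0 with rfl | hm
  · simp
  · have hm1 : (1:ℝ) ≤ (m : ℝ) ^ 2 := by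
      have h1 : (1:ℤ) ≤ |m| := Int.one_le_abs hm
      have h2 : (1:ℝ) ≤ |(m:ℝ)| := by exact_mod_cast h1
      nlinarith [abs_nonneg (m:ℝ), _root_.sq_abs (m:ℝ)]
    rw [if_neg hm, zero_add]
    set t : ℝ := (m : ℝ) ^ 2 with ht
    have ht0 : (0:ℝ) ≤ t := by nlinarith
    have hLt : (1:ℝ) ≤ L * t := by nlinarith
    have hLt0 : (0:ℝ) ≤ L * t := by linarith
    have hbig : (72:ℝ) ≤ 8 * L * π ^ 2 * t := by nlinarith [mul_le_mul hπ2 hLt zero_le_one (by positivity : (0:ℝ) ≤ π ^ 2)]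
    have h1 : |1 - 8 * L * π ^ 2 * t| ≤ 8 * L * π ^ 2 * t := by
      rw [abs_le]
      constructor <;> linarith
    have h2 : rexp (-(4 * π ^ 2 * t * L)) ≤ rexp (-t) * rexp (-2 * L) := by
      rw [← Real.exp_add]
      apply Real.exp_le_exp.mpr
      have h4 : 9 * (t * L) ≤ π ^ 2 * (t * L) := by nlinarith
      have htL1 : t ≤ t * L := by nlinarith
      have htL2 : L ≤ t * L := by nlinarith
      nlinarith
    have h3 : L * rexp (-2 * L) ≤ 1 := by
      have he : 2 * L + 1 ≤ rexp (2 * L) := Real.add_one_le_exp _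
      have hep : 0 < rexp (2 * L) := Real.exp_pos _
      have hneg : rexp (-2 * L) = (rexp (2 * L))⁻¹ := by
        rw [← Real.exp_neg]; ring_nf
      rw [hneg, mul_inv_le_iff₀ hep, one_mul]
      linarith
    have hexp : (0:ℝ) < rexp (-(4 * π ^ 2 * t * L)) := Real.exp_pos _
    have hexp2 : (0:ℝ) < rexp (-t) := Real.exp_pos _
    have hexp3 : (0:ℝ) < rexp (-2 * L) := Real.exp_pos _
    calc |1 - 8 * L * π ^ 2 * t| * rexp (-(4 * π ^ 2 * t * L))
        ≤ (8 * L * π ^ 2 * t) * (rexp (-t) * rexp (-2 * L)) := by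
          apply mul_le_mul h1 h2 hexp.le (by linarith)
      _ = (8 * π ^ 2 * (t * rexp (-t))) * (L * rexp (-2 * L)) := by ring
      _ ≤ (8 * π ^ 2 * (t * rexp (-t))) * 1 := by
          apply mul_le_mul_of_nonneg_left h3 (by positivity)
      _ = 8 * π ^ 2 * (t * rexp (-t)) := by ring
end Limit

section Final

lemma trm_tendsto (b : ℝ) (m : ℤ) :
    Tendsto (fun L : ℝ => trm b L m) atTop (𝓝 (if m = 0 then (1:ℂ) else 0)) := by
  rcases eq_or_ne m 0 with rfl | hm
  · have h : ∀ L : ℝ, trm b L 0 = 1 := by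
      intro L
      simp [trm]
    rw [if_pos rfl]
    simpa [h] using tendsto_const_nhds (α := ℂ) (f := atTop (α := ℝ)) (a := 1)
  · rw [if_neg hm]
    have hπ : (0:ℝ) < π := Real.pi_pos
    have hm1 : (1:ℝ) ≤ (m : ℝ) ^ 2 := by
      have h1 : (1:ℤ) ≤ |m| := Int.one_le_abs hm
      have h2 : (1:ℝ) ≤ |(m:ℝ)| := by exact_mod_cast h1
      nlinarith [abs_nonneg (m:ℝ), _root_.sq_abs (m:ℝ)]
    set t : ℝ := (m : ℝ) ^ 2 with ht
    have hc : (0:ℝ) < 4 * π ^ 2 * t := by positivity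
    have T1 : Tendsto (fun L : ℝ => rexp (-(4 * π ^ 2 * t * L))) atTop (𝓝 0) := by
      have h := (tendsto_exp_neg_atTop_nhds_zero).comp
        (tendsto_id.const_mul_atTop hc)
      apply h.congr
      intro L
      simp only [Function.comp_apply, id_eq]
    have T2 : Tendsto (fun L : ℝ => L * rexp (-(4 * π ^ 2 * t * L))) atTop (𝓝 0) := by
      have h := (tendsto_pow_mul_exp_neg_atTop_nhds_zero 1).comp
        (tendsto_id.const_mul_atTop hc)
      have h2 := h.const_mul (1 / (4 * π ^ 2 * t))
      rw [mul_zero] at h2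
      apply h2.congr
      intro L
      simp only [Function.comp_apply, pow_one, id_eq]
      field_simp
    have Tb : Tendsto (fun L : ℝ => (1 + 8 * π ^ 2 * t * L) * rexp (-(4 * π ^ 2 * t * L)))
        atTop (𝓝 0) := by
      have h := T1.add (T2.const_mul (8 * π ^ 2 * t))
      simp only [mul_zero, add_zero] at h
      apply h.congr
      intro L
      ring
    apply squeeze_zero_norm' _ Tb
    filter_upwards [eventually_ge_atTop (0:ℝ)] with L hL
    rw [norm_trm]
    have h1 : |1 - 8 * L * π ^ 2 * t| ≤ 1 + 8 * π ^ 2 * t * L := by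
      rw [abs_le]
      constructor <;> nlinarith
    have hexp : (0:ℝ) < rexp (-(4 * π ^ 2 * t * L)) := Real.exp_pos _
    exact mul_le_mul_of_nonneg_right h1 hexp.le

lemma tendsto_T (b : ℝ) : Tendsto (fun L : ℝ => ∑' m : ℤ, trm b L m) atTop (𝓝 1) := by
  have h := tendsto_tsum_of_dominated_convergence bnd_summable (trm_tendsto b)
    (by filter_upwards [eventually_ge_atTop (1:ℝ)] with L hL
        exact trm_le_bnd b hL)
  rwa [tsum_ite_eq (0:ℤ) (fun _ => (1:ℂ))] at h

end Final

/-- For `b ∈ ℝ`: for every `L̃ > 0` the Poisson-summation identity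
`∑_{n∈ℤ} (1/√(4πL̃)) (b−n)²/L̃ · e^{-(b−n)²/(4L̃)}
  = 2 ∑_{m∈ℤ} (1 − 8L̃π²m²) e^{-4π²m²L̃ + 2πimb}`
holds, and hence the left-hand side tends to `2` as `L̃ → ∞`. -/
theorem stmt_18 (b : ℝ) :
    (∀ L : ℝ, 0 < L →
      ((∑' n : ℤ, (1 / Real.sqrt (4 * π * L)) * ((b - n) ^ 2 / L) *
          Real.exp (-(b - n) ^ 2 / (4 * L)) : ℝ) : ℂ)
        = 2 * ∑' m : ℤ, ((1 - 8 * L * π ^ 2 * (m : ℝ) ^ 2 : ℝ) : ℂ) *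
            Complex.exp (-(4 * π ^ 2 * (m : ℂ) ^ 2 * L) + 2 * π * Complex.I * m * b))
    ∧ Tendsto (fun L : ℝ =>
        ∑' n : ℤ, (1 / Real.sqrt (4 * π * L)) * ((b - n) ^ 2 / L) *
          Real.exp (-(b - n) ^ 2 / (4 * L)))
        atTop (nhds 2) := by
  refine ⟨fun L hL => ident b hL, ?_⟩
  have hT : Tendsto (fun L : ℝ => (2:ℂ) * ∑' m : ℤ, trm b L m) atTop (𝓝 2) := by
    have h := (tendsto_T b).const_mul (2:ℂ)
    simpa using h
  have hre : Tendsto (fun L : ℝ => ((2:ℂ) * ∑' m : ℤ, trm b L m).re) atTop (𝓝 2) := by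
    have h := (Complex.continuous_re.tendsto (2:ℂ)).comp hT
    have h2 : Complex.re (2:ℂ) = (2:ℝ) := by simp
    rw [show (Complex.re ∘ fun L : ℝ => (2:ℂ) * ∑' m : ℤ, trm b L m)
      = fun L : ℝ => ((2:ℂ) * ∑' m : ℤ, trm b L m).re from rfl, h2] at h
    exact h
  apply hre.congr'
  filter_upwards [eventually_gt_atTop (0:ℝ)] with L hL
  have h := ident b hL
  have h2 : ((∑' n : ℤ, (1 / Real.sqrt (4 * π * L)) * ((b - n) ^ 2 / L) *
      rexp (-(b - n) ^ 2 / (4 * L)) : ℝ) : ℂ) = 2 * ∑' m : ℤ, trm b L m := h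
  rw [← h2, Complex.ofReal_re]
end

section
/- Let f : ℍ → ℂ be a smooth function on the upper half-plane of the form f(τ, τ̄) = ∑_{i=0}^N f_i(τ) (Im τ)^{-i} with each f_i holomorphic, and suppose f is modular of weight k for SL(2,ℤ), i.e. f(γτ, overline{γτ}) = (Cτ+D)^k f(τ,τ̄) for all γ = (A B; C D) ∈ SL(2,ℤ). If additionally f is bounded as Im τ → ∞ (uniformly in Re τ), then the holomorphic part f₀(τ) satisfies f₀((aτ+b)/(cτ+d)) = (cτ+d)^k f₀(τ) + (lower-order corrections polynomial in c/(cτ+d)); in particular f₀ is a quasimodular form of weight k. -/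
open Finset Complex


lemma lin_ne {c d : ℤ} (hcd : c = 0 → d ≠ 0) {τ : ℂ} (hτ : τ.im ≠ 0) :
    (c : ℂ) * τ + d ≠ 0 := by
  rcases eq_or_ne c 0 with hc | hc
  · simpa [hc] using fun h => (hcd hc) (by exact_mod_cast h)
  · intro h
    have him : ((c : ℂ) * τ + d).im = (c : ℝ) * τ.im := by simp
    rw [h] at him
    simp only [Complex.zero_im] at him
    rcases mul_eq_zero.mp him.symm with h1 | h1
    · exact hc (by exact_mod_cast h1)
    · exact hτ h1

lemma mob_im {a b c d : ℤ} (hdet : a * d - b * c = 1) (τ : ℂ) :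
    (((a : ℂ) * τ + b) / ((c : ℂ) * τ + d)).im
      = τ.im / Complex.normSq ((c : ℂ) * τ + d) := by
  have h : (a : ℝ) * d - b * c = 1 := by exact_mod_cast hdet
  rw [Complex.div_im, div_eq_mul_inv, div_eq_mul_inv]
  simp only [Complex.add_im, Complex.add_re, Complex.mul_im, Complex.mul_re,
    Complex.intCast_re, Complex.intCast_im]
  ring_nf
  linear_combination (τ.im * (Complex.normSq ((c:ℂ)*τ+d))⁻¹) * h

lemma mob_sub {a b c d : ℤ} (hdet : a * d - b * c = 1) {z w : ℂ}
    (hz : (c : ℂ) * z + d ≠ 0) (hw : (c : ℂ) * w + d ≠ 0) :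
    ((a : ℂ) * z + b) / ((c : ℂ) * z + d) - ((a : ℂ) * w + b) / ((c : ℂ) * w + d)
      = (z - w) / (((c : ℂ) * z + d) * ((c : ℂ) * w + d)) := by
  have h : (a : ℂ) * d - b * c = 1 := by exact_mod_cast hdet
  rw [div_sub_div _ _ hz hw]
  congr 1
  linear_combination (z - w) * h

noncomputable def Gfun (N k : ℕ) (f : ℕ → ℂ → ℂ) (a b c d : ℤ) (z w : ℂ) : ℂ :=
  (∑ i ∈ Finset.range (N + 1),
      f i (((a : ℂ) * z + b) / ((c : ℂ) * z + d)) *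
        (2 * I * ((c : ℂ) * z + d) * ((c : ℂ) * w + d) / (z - w)) ^ i)
  - ((c : ℂ) * z + d) ^ k *
      ∑ i ∈ Finset.range (N + 1), f i z * (2 * I / (z - w)) ^ i

-- (Im τ)⁻¹ as a complex number equals 2I/(τ - conj τ)
lemma im_inv_eq (τ : ℂ) (hτ : τ.im ≠ 0) :
    ((τ.im : ℂ))⁻¹ = 2 * I / (τ - (starRingEnd ℂ) τ) := by
  rw [Complex.sub_conj]
  have : (τ.im : ℂ) ≠ 0 := by exact_mod_cast hτ
  field_simp
  push_cast
  ring

section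
variable {a b c d : ℤ}

-- conj of Möbius
lemma conj_mob (a b c d : ℤ) (τ : ℂ) :
    (starRingEnd ℂ) (((a : ℂ) * τ + b) / ((c : ℂ) * τ + d))
      = ((a : ℂ) * (starRingEnd ℂ) τ + b) / ((c : ℂ) * (starRingEnd ℂ) τ + d) := by
  simp [map_div₀, map_add, map_mul]

lemma mob_im_inv (hdet : a * d - b * c = 1) {τ : ℂ} (hτ : 0 < τ.im) :
    (((((a : ℂ) * τ + b) / ((c : ℂ) * τ + d)).im : ℂ))⁻¹
      = 2 * I * ((c : ℂ) * τ + d) * ((c : ℂ) * (starRingEnd ℂ) τ + d)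
          / (τ - (starRingEnd ℂ) τ) := by
  have hcd : c = 0 → d ≠ 0 := by
    intro hc hd; rw [hc, hd] at hdet; simp at hdet
  have hne : (c : ℂ) * τ + d ≠ 0 := lin_ne hcd (ne_of_gt hτ)
  have hnormSq : (Complex.normSq ((c : ℂ) * τ + d) : ℂ)
      = ((c : ℂ) * τ + d) * ((c : ℂ) * (starRingEnd ℂ) τ + d) := by
    rw [← Complex.mul_conj]
    congr 1
    simp [map_add, map_mul]
  have h1 : (((((a : ℂ) * τ + b) / ((c : ℂ) * τ + d)).im : ℂ))⁻¹
      = (Complex.normSq ((c : ℂ) * τ + d) : ℂ) * ((τ.im : ℂ))⁻¹ := by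
    rw [mob_im hdet τ]
    push_cast
    rw [div_eq_mul_inv, mul_inv, inv_inv]
    ring
  rw [h1, hnormSq, im_inv_eq τ (ne_of_gt hτ)]
  ring

end

lemma GfunA (N k : ℕ) (f : ℕ → ℂ → ℂ) {a b c d : ℤ} (hdet : a * d - b * c = 1)
    (hmod : ∀ τ : ℂ, 0 < τ.im →
      (∑ i ∈ Finset.range (N + 1),
          f i (((a : ℂ) * τ + b) / ((c : ℂ) * τ + d)) *
            (((((a : ℂ) * τ + b) / ((c : ℂ) * τ + d)).im : ℂ))⁻¹ ^ i)
        = ((c : ℂ) * τ + d) ^ k *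
            ∑ i ∈ Finset.range (N + 1), f i τ * ((τ.im : ℂ))⁻¹ ^ i)
    {τ : ℂ} (hτ : 0 < τ.im) :
    Gfun N k f a b c d τ ((starRingEnd ℂ) τ) = 0 := by
  have h := hmod τ hτ
  rw [Gfun, sub_eq_zero]
  rw [mob_im_inv hdet hτ, im_inv_eq τ (ne_of_gt hτ)] at h
  exact h

lemma Gdiff (N k : ℕ) (f : ℕ → ℂ → ℂ)
    (hhol : ∀ i, i ≤ N → DifferentiableOn ℂ (f i) {z : ℂ | 0 < z.im})
    {a b c d : ℤ} (hdet : a * d - b * c = 1)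
    (φ ψ : ℂ → ℂ) (hφ : Differentiable ℂ φ) (hψ : Differentiable ℂ ψ)
    (S : Set ℂ) (him : ∀ s ∈ S, 0 < (φ s).im) (hne : ∀ s ∈ S, φ s ≠ ψ s) :
    DifferentiableOn ℂ (fun s => Gfun N k f a b c d (φ s) (ψ s)) S := by
  have hcd : c = 0 → d ≠ 0 := by
    intro hc hd; rw [hc, hd] at hdet; simp at hdet
  have hlin : ∀ s ∈ S, (c : ℂ) * φ s + d ≠ 0 :=
    fun s hs => lin_ne hcd (ne_of_gt (him s hs))
  have hsub : ∀ s ∈ S, φ s - ψ s ≠ 0 := fun s hs => sub_ne_zero.mpr (hne s hs)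
  have hfφ : ∀ i, i ≤ N → DifferentiableOn ℂ (fun s => f i (φ s)) S := by
    intro i hi
    exact DifferentiableOn.comp (hhol i hi) hφ.differentiableOn
      (fun s hs => him s hs)
  have hfμ : ∀ i, i ≤ N →
      DifferentiableOn ℂ (fun s => f i (((a : ℂ) * φ s + b) / ((c : ℂ) * φ s + d))) S := by
    intro i hi
    have hinner : DifferentiableOn ℂ
        (fun s => ((a : ℂ) * φ s + b) / ((c : ℂ) * φ s + d)) S :=
      DifferentiableOn.div (by fun_prop) (by fun_prop) hlin
    refine DifferentiableOn.comp (hhol i hi) hinner ?_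
    intro s hs
    simp only [Set.mem_setOf_eq]
    rw [mob_im hdet]
    exact div_pos (him s hs) (Complex.normSq_pos.mpr (hlin s hs))
  unfold Gfun
  apply DifferentiableOn.sub
  · apply DifferentiableOn.fun_sum
    intro i hi
    apply DifferentiableOn.mul (hfμ i (Nat.lt_succ_iff.mp (Finset.mem_range.mp hi)))
    exact DifferentiableOn.pow (DifferentiableOn.div (by fun_prop) (by fun_prop) hsub) i
  · apply DifferentiableOn.mul (by fun_prop)
    apply DifferentiableOn.fun_sum
    intro i hi
    apply DifferentiableOn.mul (hfφ i (Nat.lt_succ_iff.mp (Finset.mem_range.mp hi)))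
    exact DifferentiableOn.pow (DifferentiableOn.div (by fun_prop) (by fun_prop) hsub) i

lemma freq_seq {g : ℂ → ℂ} {z₀ : ℂ} (u : ℕ → ℂ)
    (hu : Filter.Tendsto u Filter.atTop (nhds z₀))
    (hne : ∀ n, u n ≠ z₀) (hz : ∀ n, g (u n) = 0) :
    ∃ᶠ z in nhdsWithin z₀ {z₀}ᶜ, g z = 0 := by
  have ht : Filter.Tendsto u Filter.atTop (nhdsWithin z₀ {z₀}ᶜ) :=
    tendsto_nhdsWithin_iff.mpr ⟨hu, Filter.Eventually.of_forall hne⟩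
  exact ht.frequently (Filter.Frequently.of_forall hz)

lemma useq_tendsto : Filter.Tendsto (fun n : ℕ => (((1 : ℝ) / (n + 1) : ℝ) : ℂ))
    Filter.atTop (nhds 0) := by
  have := (Complex.continuous_ofReal.tendsto 0).comp tendsto_one_div_add_atTop_nhds_zero_nat
  simpa [Function.comp_def, one_div] using this

lemma sweep1 (N k : ℕ) (f : ℕ → ℂ → ℂ)
    (hhol : ∀ i, i ≤ N → DifferentiableOn ℂ (f i) {z : ℂ | 0 < z.im})
    {a b c d : ℤ} (hdet : a * d - b * c = 1)
    (hA : ∀ τ : ℂ, 0 < τ.im → Gfun N k f a b c d τ ((starRingEnd ℂ) τ) = 0)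
    {z : ℂ} (hz : 0 < z.im) {t : ℝ} (ht : 0 < t) :
    Gfun N k f a b c d z (z - 2 * t * I) = 0 := by
  set p : ℂ := (z.re : ℂ) + t * I with hp
  have hpim : p.im = t := by simp [hp]
  have hpc : (starRingEnd ℂ) p = (z.re : ℂ) - t * I := by
    simp [hp, map_add, map_mul, Complex.conj_I, Complex.conj_ofReal]
    ring
  set S : Set ℂ := {s : ℂ | -t < s.im} with hS
  have hSopen : IsOpen S := isOpen_lt continuous_const Complex.continuous_im
  have him : ∀ s ∈ S, 0 < (p + s).im := by
    intro s hs
    simp only [hS, Set.mem_setOf_eq] at hs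
    simp only [Complex.add_im, hpim]
    linarith
  have hne : ∀ s ∈ S, p + s ≠ (starRingEnd ℂ) p + s := by
    intro s _ h
    have : p = (starRingEnd ℂ) p := add_right_cancel h
    have him2 : p.im = -p.im := by
      conv_lhs => rw [this]
      simp
    rw [hpim] at him2; linarith
  have hdiff : DifferentiableOn ℂ
      (fun s => Gfun N k f a b c d (p + s) ((starRingEnd ℂ) p + s)) S :=
    Gdiff N k f hhol hdet _ _ (by fun_prop) (by fun_prop) S him hne
  have hzero : ∀ n : ℕ,
      (fun s => Gfun N k f a b c d (p + s) ((starRingEnd ℂ) p + s))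
        ((((1 : ℝ) / (n + 1) : ℝ) : ℂ)) = 0 := by
    intro n
    have h1 : (starRingEnd ℂ) (p + (((1 : ℝ) / (n + 1) : ℝ) : ℂ))
        = (starRingEnd ℂ) p + (((1 : ℝ) / (n + 1) : ℝ) : ℂ) := by
      rw [map_add, Complex.conj_ofReal]
    have h2 : 0 < (p + (((1 : ℝ) / (n + 1) : ℝ) : ℂ)).im := by
      simp [hpim, ht]
    have := hA _ h2
    rw [h1] at this
    exact this
  have hfreq := freq_seq (g := fun s => Gfun N k f a b c d (p + s) ((starRingEnd ℂ) p + s)) _ useq_tendsto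
    (fun n => Complex.ofReal_ne_zero.mpr (ne_of_gt (by positivity))) hzero
  have h0S : (0 : ℂ) ∈ S := by simp [hS]; linarith
  have heq := (hdiff.analyticOnNhd hSopen).eqOn_zero_of_preconnected_of_frequently_eq_zero
    (convex_halfSpace_im_gt (-t)).isPreconnected h0S hfreq
  have hmem : z - p ∈ S := by
    simp only [hS, Set.mem_setOf_eq, Complex.sub_im, hpim]
    linarith
  have := heq hmem
  simp only [Pi.zero_apply] at this
  have e1 : p + (z - p) = z := by ring
  have e2 : (starRingEnd ℂ) p + (z - p) = z - 2 * t * I := by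
    rw [hpc, hp]; ring
  rw [e1, e2] at this
  exact this

lemma sweep2 (N k : ℕ) (f : ℕ → ℂ → ℂ)
    (hhol : ∀ i, i ≤ N → DifferentiableOn ℂ (f i) {z : ℂ | 0 < z.im})
    {a b c d : ℤ} (hdet : a * d - b * c = 1)
    (hA : ∀ τ : ℂ, 0 < τ.im → Gfun N k f a b c d τ ((starRingEnd ℂ) τ) = 0)
    {z : ℂ} (hz : 0 < z.im) {w : ℂ} (hw : w.im < z.im) :
    Gfun N k f a b c d z w = 0 := by
  set S : Set ℂ := {w : ℂ | w.im < z.im} with hS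
  have hSopen : IsOpen S := isOpen_lt Complex.continuous_im continuous_const
  have hne : ∀ s ∈ S, z ≠ s := by
    intro s hs h
    simp only [hS, Set.mem_setOf_eq] at hs
    rw [← h] at hs; exact lt_irrefl _ hs
  have hdiff : DifferentiableOn ℂ (fun s => Gfun N k f a b c d z s) S :=
    Gdiff N k f hhol hdet (fun _ => z) id (by fun_prop) (by fun_prop) S
      (fun s _ => hz) hne
  -- sequence tending to z - 2I with values on the ray
  set u : ℕ → ℂ := fun n => z - 2 * (((1 : ℝ) + 1 / (n + 1) : ℝ) : ℂ) * I with hu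
  have hzero : ∀ n, (fun s => Gfun N k f a b c d z s) (u n) = 0 := by
    intro n
    exact sweep1 N k f hhol hdet hA hz (t := (1 : ℝ) + 1 / (n + 1)) (by positivity)
  have hseq : Filter.Tendsto (fun n : ℕ => ((1 : ℝ) + 1 / (n + 1) : ℝ))
      Filter.atTop (nhds 1) := by
    simpa using (tendsto_const_nhds (x := (1:ℝ))).add tendsto_one_div_add_atTop_nhds_zero_nat
  have hcont : Continuous (fun x : ℝ => z - 2 * (x : ℂ) * I) := by fun_prop
  have hut : Filter.Tendsto u Filter.atTop (nhds (z - 2 * I)) := by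
    have := (hcont.tendsto 1).comp hseq
    simpa [hu, Function.comp_def] using this
  have hune : ∀ n, u n ≠ z - 2 * I := by
    intro n h
    have him := congrArg Complex.im h
    simp only [hu, Complex.sub_im, Complex.mul_im, Complex.mul_re, Complex.I_im,
      Complex.I_re, Complex.ofReal_re, Complex.ofReal_im, Complex.re_ofNat,
      Complex.im_ofNat] at him
    have : (1 : ℝ) / (n + 1) > 0 := by positivity
    nlinarith [him]
  have hfreq := freq_seq (g := fun s => Gfun N k f a b c d z s) u hut hune hzero
  have hmem : z - 2 * I ∈ S := by
    simp only [hS, Set.mem_setOf_eq, Complex.sub_im, Complex.mul_im, Complex.I_im]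
    norm_num
  have heq := (hdiff.analyticOnNhd hSopen).eqOn_zero_of_preconnected_of_frequently_eq_zero
    (convex_halfSpace_im_lt z.im).isPreconnected hmem hfreq
  exact heq hw

/-- Let `f(τ,τ̄) = ∑_{i=0}^N f_i(τ) (Im τ)^{-i}` with each `f_i` holomorphic on the upper
half-plane, suppose `f` is modular of weight `k` for `SL(2,ℤ)` and bounded as
`Im τ → ∞` uniformly in `Re τ`.  Then the holomorphic part `f₀` is quasimodular of
weight `k`: there exist finitely many holomorphic functions `g_r` on the upper
half-plane with `g₀ = f₀` and
`f₀(γτ) = (cτ+d)^k ∑_r g_r(τ) (c/(cτ+d))^r` for all `γ = (a b; c d) ∈ SL(2,ℤ)`. -/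
theorem stmt_19 (k N : ℕ) (f : ℕ → ℂ → ℂ)
    (hhol : ∀ i, i ≤ N → DifferentiableOn ℂ (f i) {z : ℂ | 0 < z.im})
    (hmod : ∀ a b c d : ℤ, a * d - b * c = 1 → ∀ τ : ℂ, 0 < τ.im →
      (∑ i ∈ Finset.range (N + 1),
          f i (((a : ℂ) * τ + b) / ((c : ℂ) * τ + d)) *
            (((((a : ℂ) * τ + b) / ((c : ℂ) * τ + d)).im : ℂ))⁻¹ ^ i)
        = ((c : ℂ) * τ + d) ^ k *
            ∑ i ∈ Finset.range (N + 1), f i τ * ((τ.im : ℂ))⁻¹ ^ i)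
    (hbd : ∃ Cb T : ℝ, ∀ τ : ℂ, T ≤ τ.im →
      ‖∑ i ∈ Finset.range (N + 1), f i τ * ((τ.im : ℂ))⁻¹ ^ i‖ ≤ Cb) :
    ∃ (M : ℕ) (g : ℕ → ℂ → ℂ),
      (∀ r, DifferentiableOn ℂ (g r) {z : ℂ | 0 < z.im})
      ∧ g 0 = f 0
      ∧ ∀ a b c d : ℤ, a * d - b * c = 1 → ∀ τ : ℂ, 0 < τ.im →
          f 0 (((a : ℂ) * τ + b) / ((c : ℂ) * τ + d))
            = ((c : ℂ) * τ + d) ^ k *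
                ∑ r ∈ Finset.range (M + 1),
                  g r τ * ((c : ℂ) / ((c : ℂ) * τ + d)) ^ r := by
  classical
  refine ⟨N, fun r τ => if r ≤ N then (2 * I) ^ r * f r τ else 0, ?_, ?_, ?_⟩
  · intro r
    by_cases hr : r ≤ N
    · simp only [if_pos hr]
      exact (hhol r hr).const_mul _
    · simp only [if_neg hr]
      exact differentiableOn_const 0
  · funext τ; simp
  · intro a b c d hdet τ hτ
    have hA : ∀ σ : ℂ, 0 < σ.im → Gfun N k f a b c d σ ((starRingEnd ℂ) σ) = 0 :=
      fun σ hσ => GfunA N k f hdet (hmod a b c d hdet) hσ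
    have hS2 : ∀ w : ℂ, w.im < τ.im → Gfun N k f a b c d τ w = 0 :=
      fun w hw => sweep2 N k f hhol hdet hA hτ hw
    have hcd : c = 0 → d ≠ 0 := by
      intro hc hd; rw [hc, hd] at hdet; simp at hdet
    by_cases hc : c = 0
    · -- c = 0 case
      subst hc
      have had : a * d = 1 := by linarith [hdet]
      have hd2 : (d : ℂ) * d = 1 := by
        rcases Int.eq_one_or_neg_one_of_mul_eq_one (by linarith [had] : d * a = 1) with h | h
        · rw [h]; norm_num
        · rw [h]; norm_num
      set μ : ℂ := ((a : ℂ) * τ + b) / (((0 : ℤ) : ℂ) * τ + d) with hμ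
      set e : ℕ → ℂ := fun i => f i μ - (d : ℂ) ^ k * f i τ with he
      have hu : ∀ u : ℂ, 0 < u.re →
          ∑ i ∈ Finset.range (N + 1), e i * u ^ i = 0 := by
        intro u hure
        have hune0 : u ≠ 0 := by
          intro h; rw [h] at hure; simp at hure
        have him2 : 0 < (2 * I / u).im := by
          rw [Complex.div_im]
          have : (2 * I).im = 2 := by simp
          have h2 : (2 * I).re = 0 := by simp
          rw [this, h2]
          simp only [zero_mul, zero_div, sub_zero]
          exact div_pos (by positivity) (Complex.normSq_pos.mpr hune0)
        have hwim : (τ - 2 * I / u).im < τ.im := by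
          simp only [Complex.sub_im]; linarith
        have h0 := hS2 _ hwim
        unfold Gfun at h0
        have hsub : τ - (τ - 2 * I / u) = 2 * I / u := by ring
        have hval : 2 * I / (τ - (τ - 2 * I / u)) = u := by
          rw [hsub]; field_simp
        have hfac : 2 * I * (((0 : ℤ) : ℂ) * τ + d) * (((0 : ℤ) : ℂ) * (τ - 2 * I / u) + d)
            / (τ - (τ - 2 * I / u)) = u := by
          push_cast
          rw [zero_mul, zero_add, zero_mul, zero_add]
          rw [show (2 : ℂ) * I * d * d / (τ - (τ - 2 * I / u))
              = (d * d) * (2 * I / (τ - (τ - 2 * I / u))) by ring]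
          rw [hd2, hval, one_mul]
        rw [hfac, hval] at h0
        rw [sub_eq_zero] at h0
        rw [Finset.mul_sum] at h0
        rw [he]
        simp only [sub_mul]
        rw [Finset.sum_sub_distrib]
        rw [sub_eq_zero]
        rw [h0]
        apply Finset.sum_congr rfl
        intro i _
        ring
      have hcont : Continuous (fun u : ℂ => ∑ i ∈ Finset.range (N + 1), e i * u ^ i) := by
        fun_prop
      have h1 : Filter.Tendsto
          (fun n : ℕ => (fun u : ℂ => ∑ i ∈ Finset.range (N + 1), e i * u ^ i)
            ((((1 : ℝ) / (n + 1) : ℝ) : ℂ)))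
          Filter.atTop (nhds (∑ i ∈ Finset.range (N + 1), e i * (0 : ℂ) ^ i)) :=
        (hcont.tendsto 0).comp useq_tendsto
      have h2 : ∀ n : ℕ, (fun u : ℂ => ∑ i ∈ Finset.range (N + 1), e i * u ^ i)
          ((((1 : ℝ) / (n + 1) : ℝ) : ℂ)) = 0 := by
        intro n
        apply hu
        simp only [Complex.ofReal_re]
        positivity
      have hzero : ∑ i ∈ Finset.range (N + 1), e i * (0 : ℂ) ^ i = 0 :=
        tendsto_nhds_unique ((h1.congr h2)) tendsto_const_nhds
      have hzero2 : e 0 = 0 := by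
        rw [Finset.sum_eq_single 0] at hzero
        · simpa using hzero
        · intro i _ hi
          rw [zero_pow hi, mul_zero]
        · intro h; simp at h
      rw [he] at hzero2
      simp only [sub_eq_zero] at hzero2
      rw [hzero2]
      push_cast
      rw [zero_mul, zero_add]
      congr 1
      rw [Finset.sum_eq_single 0]
      · simp
      · intro i _ hi
        rw [zero_div, zero_pow hi, mul_zero]
      · intro h; simp at h
    · -- c ≠ 0 case
      have hcC : (c : ℂ) ≠ 0 := by exact_mod_cast hc
      have hτne : (c : ℂ) * τ + d ≠ 0 := lin_ne hcd (ne_of_gt hτ)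
      set w₀ : ℂ := -(d : ℂ) / (c : ℂ) with hw₀
      have hw₀r : w₀ = (((-d / c : ℝ)) : ℂ) := by rw [hw₀]; push_cast; ring
      have hw₀im : w₀.im = 0 := by rw [hw₀r]; exact Complex.ofReal_im _
      have h0 := hS2 w₀ (by rw [hw₀im]; exact hτ)
      unfold Gfun at h0
      have hcw : (c : ℂ) * w₀ + d = 0 := by
        rw [hw₀]; field_simp
        ring
      rw [hcw] at h0
      simp only [mul_zero, zero_div, zero_pow] at h0
      rw [sub_eq_zero] at h0
      rw [Finset.sum_eq_single 0] at h0
      · simp only [pow_zero, mul_one] at h0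
        rw [h0]
        congr 1
        have hτw : τ - w₀ = ((c : ℂ) * τ + d) / c := by
          rw [hw₀]; field_simp; ring
        have hrw : 2 * I / (τ - w₀) = 2 * I * ((c : ℂ) / ((c : ℂ) * τ + d)) := by
          rw [hτw, div_div_eq_mul_div, mul_div_assoc]
        apply Finset.sum_congr rfl
        intro i hi
        have hiN : i ≤ N := Nat.lt_succ_iff.mp (Finset.mem_range.mp hi)
        simp only [if_pos hiN, hrw, mul_pow]
        ring
      · intro i _ hi
        rw [zero_pow hi, mul_zero]
      · intro h; simp at h
end
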